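/- arXiv:2101.08544 — 9 statements merged into one kernel-verified Lean document; each statement's English description precedes it below -/
import Mathlib

section
/- Let χ: ℝ⁺ → ℝ be a kernel (satisfying ∑_{k∈ℤ} χ(e^{-k}u) = 1 for all u > 0 and finite absolute moment of some order ν > 0). Let f: ℝ⁺ → ℝ be bounded, t ∈ ℝ⁺ a point where the one-sided limits f(t+0) and f(t-0) exist, and define h_t(x) = f(x) - f(t-0) for x < t, h_t(x) = f(x) - f(t+0) for x > t, h_t(t) = 0. If w·log(t) ∈ ℤ, then (S_w^χ f)(t) = (S_w^χ h_t)(t) + f(t-0) + ψ_χ⁻(t^w)·[f(t+0) - f(t-0)] + χ(1)·[f(t) - f(t-0)], where ψ_χ⁻(u) := ∑_{k > log u} χ(u e^{-k}). -/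
open Real Filter Set MeasureTheory

noncomputable def expSamp (χ f : ℝ → ℝ) (w t : ℝ) : ℝ :=
  ∑' k : ℤ, χ (Real.exp (-(k : ℝ)) * t ^ w) * f (Real.exp ((k : ℝ) / w))

noncomputable def psiMinus (χ : ℝ → ℝ) (u : ℝ) : ℝ :=
  ∑' k : ℤ, if Real.log u < (k : ℝ) then χ (u * Real.exp (-(k : ℝ))) else 0

noncomputable def psiPlus (χ : ℝ → ℝ) (u : ℝ) : ℝ :=
  ∑' k : ℤ, if (k : ℝ) < Real.log u then χ (u * Real.exp (-(k : ℝ))) else 0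

/-- χ is a kernel: absolute summability, partition of unity, and a finite absolute
moment of some order ν > 0. -/
def IsKernel (χ : ℝ → ℝ) : Prop :=
  (∀ u : ℝ, 0 < u → Summable fun k : ℤ => |χ (Real.exp (-(k : ℝ)) * u)|) ∧
  (∀ u : ℝ, 0 < u → HasSum (fun k : ℤ => χ (Real.exp (-(k : ℝ)) * u)) 1) ∧
  ∃ ν : ℝ, 0 < ν ∧ ∃ C : ℝ, ∀ u : ℝ, 0 < u →
    (Summable fun k : ℤ => |χ (Real.exp (-(k : ℝ)) * u)| * |(k : ℝ) - Real.log u| ^ ν) ∧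
    ∑' k : ℤ, |χ (Real.exp (-(k : ℝ)) * u)| * |(k : ℝ) - Real.log u| ^ ν ≤ C

/-- Logarithmic modulus of continuity. -/
noncomputable def logMod (f : ℝ → ℝ) (δ : ℝ) : ℝ :=
  sSup {d : ℝ | ∃ p q : ℝ, 0 < p ∧ 0 < q ∧ |Real.log p - Real.log q| ≤ δ ∧ d = |f p - f q|}

/-- Sup norm of a function on the positive reals. -/
noncomputable def supNormPos (f : ℝ → ℝ) : ℝ := ⨆ x : {x : ℝ // 0 < x}, |f x.1|

/-- Absolute moment of order ν of the kernel χ. -/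
noncomputable def absMoment (χ : ℝ → ℝ) (ν : ℝ) : ℝ :=
  ⨆ u : {u : ℝ // 0 < u},
    ∑' k : ℤ, |χ (Real.exp (-(k : ℝ)) * u.1)| * |(k : ℝ) - Real.log u.1| ^ ν

/-- log-uniform continuity on ℝ⁺. -/
def LogUniformCont (f : ℝ → ℝ) : Prop :=
  ∀ ε : ℝ, 0 < ε → ∃ δ : ℝ, 0 < δ ∧ ∀ p q : ℝ, 0 < p → 0 < q →
    |Real.log p - Real.log q| < δ → |f p - f q| < ε

/-- The second order Mellin B-spline. -/
noncomputable def mellinB2 (t : ℝ) : ℝ :=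
  if 1 ≤ t ∧ t ≤ Real.exp 1 then 1 - Real.log t
  else if Real.exp (-1) ≤ t ∧ t < 1 then 1 + Real.log t
  else 0
/-- Representation lemma, case w·log t ∈ ℤ. -/
theorem stmt0 (χ f : ℝ → ℝ) (hχ : IsKernel χ)
    (B : ℝ) (hf : ∀ x : ℝ, 0 < x → |f x| ≤ B)
    (t : ℝ) (ht : 0 < t) (fp fm : ℝ)
    (hfp : Filter.Tendsto f (nhdsWithin t (Set.Ioi t)) (nhds fp))
    (hfm : Filter.Tendsto f (nhdsWithin t (Set.Iio t)) (nhds fm))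
    (w : ℝ) (hw : 0 < w) (hwt : ∃ m : ℤ, w * Real.log t = (m : ℝ)) :
    expSamp χ f w t =
      expSamp χ (fun x => if x < t then f x - fm else if t < x then f x - fp else 0) w t
        + fm + psiMinus χ (t ^ w) * (fp - fm) + χ 1 * (f t - fm) := by
  classical
  obtain ⟨m, hm⟩ := hwt
  have hu : (0:ℝ) < t ^ w := Real.rpow_pos_of_pos ht w
  have hum : t ^ w = Real.exp (m : ℝ) := by
    rw [Real.rpow_def_of_pos ht, mul_comm, hm]
  set u : ℝ := t ^ w with hu_def
  have hlogu : Real.log u = (m : ℝ) := by rw [hum, Real.log_exp]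
  set g : ℤ → ℝ := fun k => χ (Real.exp (-(k : ℝ)) * u) with hg_def
  have habs : Summable fun k : ℤ => |g k| := hχ.1 u hu
  have hsum1 : HasSum g 1 := hχ.2.1 u hu
  have hgm : g m = χ 1 := by
    have h1 : Real.exp (-(m : ℝ)) * u = 1 := by
      rw [hum, ← Real.exp_add]; simp
    simp only [hg_def, h1]
  have hlt : ∀ k : ℤ, Real.exp ((k:ℝ)/w) < t ↔ k < m := by
    intro k
    rw [← Real.exp_log ht, Real.exp_lt_exp, div_lt_iff₀ hw, mul_comm, hm, Int.cast_lt]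
  have hgt : ∀ k : ℤ, t < Real.exp ((k:ℝ)/w) ↔ m < k := by
    intro k
    rw [← Real.exp_log ht, Real.exp_lt_exp, lt_div_iff₀ hw, mul_comm, hm, Int.cast_lt]
  set h' : ℝ → ℝ := fun x => if x < t then f x - fm else if t < x then f x - fp else 0
    with hh_def
  set c : ℤ → ℝ := fun k => if k < m then fm else if m < k then fp else f t with hc_def
  have key : ∀ (F : ℤ → ℝ) (C : ℝ), (∀ k, |F k| ≤ C) →
      Summable (fun k => g k * F k) := by
    intro F C hF
    apply Summable.of_abs
    apply Summable.of_nonneg_of_le (fun k => abs_nonneg _) (fun k => ?_) (habs.mul_right C)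
    rw [abs_mul]
    exact mul_le_mul_of_nonneg_left (hF k) (abs_nonneg _)
  have hsf : Summable (fun k : ℤ => g k * f (Real.exp ((k:ℝ)/w))) :=
    key _ B (fun k => hf _ (Real.exp_pos _))
  have hsc : Summable (fun k : ℤ => g k * c k) := by
    refine key c (|fm| + |fp| + |f t|) (fun k => ?_)
    have h1 : 0 ≤ |fm| := abs_nonneg _
    have h2 : 0 ≤ |fp| := abs_nonneg _
    have h3 : 0 ≤ |f t| := abs_nonneg _
    have h4 : |fm| ≤ |fm| + |fp| + |f t| := by linarith
    have h5 : |fp| ≤ |fm| + |fp| + |f t| := by linarith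
    have h6 : |f t| ≤ |fm| + |fp| + |f t| := by linarith
    simp only [hc_def]
    split_ifs <;> assumption
  have hpoint : ∀ k : ℤ, f (Real.exp ((k:ℝ)/w)) = h' (Real.exp ((k:ℝ)/w)) + c k := by
    intro k
    rcases lt_trichotomy k m with h | h | h
    · simp only [hh_def, hc_def, if_pos ((hlt k).mpr h), if_pos h]; ring
    · subst h
      have hx : Real.exp ((k:ℝ)/w) = t := by
        have hdiv : (k : ℝ) / w = Real.log t := by
          rw [← hm]; field_simp
        rw [hdiv, Real.exp_log ht]
      simp only [hh_def, hc_def, hx, lt_irrefl, if_false]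
      ring
    · have hx2 : t < Real.exp ((k:ℝ)/w) := (hgt k).mpr h
      simp only [hh_def, hc_def, if_neg (not_lt.mpr hx2.le), if_pos hx2,
        if_neg (not_lt.mpr h.le), if_pos h]
      ring
  have hh_eq : (fun k : ℤ => g k * h' (Real.exp ((k:ℝ)/w)))
      = fun k => g k * f (Real.exp ((k:ℝ)/w)) - g k * c k := by
    funext k; rw [hpoint k]; ring
  set s2 : ℤ → ℝ := fun k => if m < k then g k else 0 with hs2_def
  have hs2 : Summable s2 := by
    apply Summable.of_abs
    apply Summable.of_nonneg_of_le (fun k => abs_nonneg _) (fun k => ?_) habs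
    simp only [hs2_def]
    split_ifs <;> simp
  have hpsi : psiMinus χ u = ∑' k, s2 k := by
    unfold psiMinus
    congr 1; funext k
    rw [hlogu, hs2_def]
    simp only [Int.cast_lt, mul_comm u]
    rfl
  have hdecomp : (fun k : ℤ => fm * g k + (fp - fm) * s2 k
        + (if k = m then (f t - fm) * χ 1 else 0)) = fun k => g k * c k := by
    funext k
    rcases lt_trichotomy k m with h | h | h
    · simp only [hc_def, hs2_def, if_pos h, if_neg (not_lt.mpr h.le), if_neg h.ne]
      ring
    · subst h
      simp only [hc_def, hs2_def, lt_irrefl, if_false, if_pos rfl, hgm, ite_true]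
      ring
    · simp only [hc_def, hs2_def, if_neg (not_lt.mpr h.le), if_pos h, if_neg h.ne']
      ring
  have hsum_c : HasSum (fun k : ℤ => g k * c k)
      (fm + (fp - fm) * (∑' k, s2 k) + (f t - fm) * χ 1) := by
    have h1 : HasSum (fun k : ℤ => fm * g k) fm := by simpa using hsum1.mul_left fm
    have h2 : HasSum (fun k : ℤ => (fp - fm) * s2 k) ((fp - fm) * ∑' k, s2 k) :=
      hs2.hasSum.mul_left _
    have h3 : HasSum (fun k : ℤ => if k = m then (f t - fm) * χ 1 else 0)
        ((f t - fm) * χ 1) := hasSum_ite_eq m _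
    have := (h1.add h2).add h3
    rwa [hdecomp] at this
  have hEf : expSamp χ f w t = ∑' k : ℤ, g k * f (Real.exp ((k:ℝ)/w)) := rfl
  have hEh : expSamp χ h' w t = ∑' k : ℤ, g k * h' (Real.exp ((k:ℝ)/w)) := rfl
  rw [hEf, hEh, hh_eq, Summable.tsum_sub hsf hsc, hsum_c.tsum_eq, hpsi]
  ring
end

section
/- Let χ be a kernel, f: ℝ⁺ → ℝ bounded, t ∈ ℝ⁺ a point where the one-sided limits f(t±0) exist, and h_t defined by h_t(x) = f(x) - f(t-0) for x < t, h_t(x) = f(x) - f(t+0) for x > t, h_t(t) = 0. If w·log(t) ∉ ℤ, then (S_w^χ f)(t) = (S_w^χ h_t)(t) + f(t-0) + ψ_χ⁻(t^w)·[f(t+0) - f(t-0)]. -/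
open Real Filter Set MeasureTheory

/-- Representation lemma, case w·log t ∉ ℤ. -/
theorem stmt1 (χ f : ℝ → ℝ) (hχ : IsKernel χ)
    (B : ℝ) (hf : ∀ x : ℝ, 0 < x → |f x| ≤ B)
    (t : ℝ) (ht : 0 < t) (fp fm : ℝ)
    (hfp : Filter.Tendsto f (nhdsWithin t (Set.Ioi t)) (nhds fp))
    (hfm : Filter.Tendsto f (nhdsWithin t (Set.Iio t)) (nhds fm))
    (w : ℝ) (hw : 0 < w) (hwt : ∀ m : ℤ, w * Real.log t ≠ (m : ℝ)) :
    expSamp χ f w t =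
      expSamp χ (fun x => if x < t then f x - fm else if t < x then f x - fp else 0) w t
        + fm + psiMinus χ (t ^ w) * (fp - fm) := by
  have hu : 0 < t ^ w := Real.rpow_pos_of_pos ht w
  have hlogu : Real.log (t ^ w) = w * Real.log t := Real.log_rpow ht w
  set u := t ^ w with hudef
  set g : ℤ → ℝ := fun k => χ (Real.exp (-(k : ℝ)) * u) with hg
  have hgs : Summable fun k : ℤ => |g k| := hχ.1 u hu
  have hsum1 : HasSum g 1 := hχ.2.1 u hu
  set h : ℝ → ℝ := fun x => if x < t then f x - fm else if t < x then f x - fp else 0 with hh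
  set ind : ℤ → ℝ := fun k => if Real.log u < (k : ℝ) then fp - fm else 0 with hind
  have hC : ∀ k : ℤ, |h (Real.exp ((k : ℝ) / w))| ≤ B + |fm| + |fp| := by
    intro k
    have hx : 0 < Real.exp ((k : ℝ) / w) := Real.exp_pos _
    have hfb := hf _ hx
    have habs1 : |f (Real.exp ((k : ℝ) / w)) - fm| ≤ |f (Real.exp ((k : ℝ) / w))| + |fm| :=
      abs_sub _ _
    have habs2 : |f (Real.exp ((k : ℝ) / w)) - fp| ≤ |f (Real.exp ((k : ℝ) / w))| + |fp| :=
      abs_sub _ _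
    simp only [hh]
    split_ifs with h1 h2
    · have := abs_nonneg fp; linarith
    · have := abs_nonneg fm; linarith
    · have hB : 0 ≤ B := le_trans (abs_nonneg _) hfb
      have := abs_nonneg fm; have := abs_nonneg fp
      simp only [abs_zero]; linarith
  have hkey : ∀ k : ℤ, f (Real.exp ((k : ℝ) / w)) =
      h (Real.exp ((k : ℝ) / w)) + fm + ind k := by
    intro k
    have hne : (k : ℝ) ≠ w * Real.log t := (hwt k).symm
    rcases lt_or_gt_of_ne hne with hk | hk
    · have hlt : Real.exp ((k : ℝ) / w) < t := by
        rw [← Real.exp_log ht, Real.exp_lt_exp, div_lt_iff₀ hw]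
        linarith [mul_comm (Real.log t) w]
      simp only [hh, hind, hlogu, if_pos hlt, if_neg (not_lt.mpr hk.le)]
      ring
    · have hgt : t < Real.exp ((k : ℝ) / w) := by
        rw [← Real.exp_log ht, Real.exp_lt_exp, lt_div_iff₀ hw]
        linarith [mul_comm (Real.log t) w]
      simp only [hh, hind, hlogu, if_neg (not_lt.mpr hgt.le), if_pos hgt, if_pos hk]
      ring
  have hsum_h : Summable fun k : ℤ => g k * h (Real.exp ((k : ℝ) / w)) := by
    apply Summable.of_abs
    apply Summable.of_nonneg_of_le (fun k => abs_nonneg _) (fun k => ?_)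
      (hgs.mul_right (B + |fm| + |fp|))
    rw [abs_mul]
    exact mul_le_mul_of_nonneg_left (hC k) (abs_nonneg _)
  have hsum_fm : Summable fun k : ℤ => g k * fm := hsum1.summable.mul_right fm
  have hsum_ind : Summable fun k : ℤ => g k * ind k := by
    apply Summable.of_abs
    apply Summable.of_nonneg_of_le (fun k => abs_nonneg _) (fun k => ?_)
      (hgs.mul_right |fp - fm|)
    rw [abs_mul]
    apply mul_le_mul_of_nonneg_left _ (abs_nonneg _)
    simp only [hind]
    split_ifs
    · exact le_refl _
    · simp [abs_nonneg]
  have hstep : expSamp χ f w t =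
      ∑' k : ℤ, (g k * h (Real.exp ((k : ℝ) / w)) + (g k * fm + g k * ind k)) := by
    unfold expSamp
    congr 1; funext k; rw [hkey k]; ring
  rw [hstep, Summable.tsum_add hsum_h (hsum_fm.add hsum_ind), Summable.tsum_add hsum_fm hsum_ind]
  have e1 : ∑' k : ℤ, g k * h (Real.exp ((k : ℝ) / w)) = expSamp χ h w t := rfl
  have e2 : ∑' k : ℤ, g k * fm = fm := by
    rw [(hsum1.mul_right fm).tsum_eq, one_mul]
  have e3 : ∑' k : ℤ, g k * ind k = psiMinus χ u * (fp - fm) := by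
    unfold psiMinus
    rw [← tsum_mul_right]
    congr 1; funext k
    simp only [hg, hind]
    split_ifs
    · rw [mul_comm u]
    · simp
  rw [e1, e2, e3]
  ring
end

section
/- Let χ be a kernel and f: ℝ⁺ → ℝ a bounded function with a non-removable jump discontinuity at t ∈ ℝ⁺ (i.e. f(t+0) and f(t-0) exist and f(t+0) ≠ f(t-0)). For α ∈ ℝ, the following are equivalent: (i) lim_{w→∞, w·log t ∈ ℤ} (S_w^χ f)(t) = α f(t+0) + (1 - α - χ(1)) f(t-0) + χ(1) f(t); (ii) ψ_χ⁻(1) = α; (iii) ψ_χ⁺(1) = 1 - α - χ(1). -/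
open Real Filter Set MeasureTheory

/-- Auxiliary: the three-way split of the partition of unity at u = 1. -/
lemma kernel_split_aux (χ : ℝ → ℝ)
    (hS : Summable fun k : ℤ => |χ (Real.exp (-(k : ℝ)))|)
    (hP : HasSum (fun k : ℤ => χ (Real.exp (-(k : ℝ)))) 1) :
    psiMinus χ 1 + psiPlus χ 1 + χ 1 = 1 := by
  set h : ℤ → ℝ := fun k => χ (Real.exp (-(k : ℝ))) with hh
  have hm : Summable fun k : ℤ => if (0:ℝ) < (k:ℝ) then h k else 0 := by
    refine Summable.of_norm_bounded hS fun k => ?_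
    by_cases hk : (0:ℝ) < (k:ℝ) <;> simp [hk, Real.norm_eq_abs, abs_nonneg, hh]
  have hp : Summable fun k : ℤ => if (k:ℝ) < (0:ℝ) then h k else 0 := by
    refine Summable.of_norm_bounded hS fun k => ?_
    by_cases hk : (k:ℝ) < (0:ℝ) <;> simp [hk, Real.norm_eq_abs, abs_nonneg, hh]
  have h0 : Summable fun k : ℤ => if k = (0:ℤ) then χ 1 else 0 :=
    summable_of_ne_finset_zero (s := {0}) (by intro k hk; simp at hk; simp [hk])
  have key : ∀ k : ℤ, h k = (if (0:ℝ) < (k:ℝ) then h k else 0)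
      + (if (k:ℝ) < (0:ℝ) then h k else 0) + (if k = (0:ℤ) then χ 1 else 0) := by
    intro k
    rcases lt_trichotomy (k:ℝ) 0 with hk | hk | hk
    · have hk' : k < 0 := by exact_mod_cast hk
      have hne : k ≠ 0 := ne_of_lt hk'
      simp [hk, hk', not_lt_of_gt hk, not_lt_of_gt hk', hne]
    · have : k = 0 := by exact_mod_cast hk
      simp [this, hh]
    · have hk' : 0 < k := by exact_mod_cast hk
      have hne : k ≠ 0 := (ne_of_lt hk').symm
      simp [hk, hk', not_lt_of_gt hk, not_lt_of_gt hk', hne]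
  have hsum : ∑' k, h k = psiMinus χ 1 + psiPlus χ 1 + χ 1 := by
    have e1 : ∑' k, h k = (∑' k : ℤ, if (0:ℝ) < (k:ℝ) then h k else 0)
        + (∑' k : ℤ, if (k:ℝ) < (0:ℝ) then h k else 0)
        + (∑' k : ℤ, if k = (0:ℤ) then χ 1 else 0) := by
      rw [← Summable.tsum_add hm hp, ← Summable.tsum_add (hm.add hp) h0]
      exact tsum_congr key
    rw [e1, tsum_ite_eq (0:ℤ)]
    congr 1
    congr 1
    · rw [psiMinus]; refine (tsum_congr fun k => ?_).symm
      simp [Real.log_one, hh]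
    · rw [psiPlus]; refine (tsum_congr fun k => ?_).symm
      simp [Real.log_one, hh]
  rw [← hsum, hP.tsum_eq]

/-- Behaviour at a jump discontinuity along w with w·log t ∈ ℤ. -/
theorem stmt3 (χ f : ℝ → ℝ) (hχ : IsKernel χ)
    (B : ℝ) (hf : ∀ x : ℝ, 0 < x → |f x| ≤ B)
    (t : ℝ) (ht : 0 < t) (fp fm : ℝ)
    (hfp : Filter.Tendsto f (nhdsWithin t (Set.Ioi t)) (nhds fp))
    (hfm : Filter.Tendsto f (nhdsWithin t (Set.Iio t)) (nhds fm))
    (hjump : fp ≠ fm) (α : ℝ)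
    (hNe : (Filter.atTop ⊓ Filter.principal {w : ℝ | ∃ m : ℤ, w * Real.log t = (m : ℝ)}).NeBot) :
    (Filter.Tendsto (fun w => expSamp χ f w t)
        (Filter.atTop ⊓ Filter.principal {w : ℝ | ∃ m : ℤ, w * Real.log t = (m : ℝ)})
        (nhds (α * fp + (1 - α - χ 1) * fm + χ 1 * f t))
      ↔ psiMinus χ 1 = α) ∧
    (psiMinus χ 1 = α ↔ psiPlus χ 1 = 1 - α - χ 1) := by
  obtain ⟨hsumm, hpart, -⟩ := hχ
  have hS : Summable fun k : ℤ => |χ (Real.exp (-(k : ℝ)))| := by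
    simpa using hsumm 1 one_pos
  have hP : HasSum (fun k : ℤ => χ (Real.exp (-(k : ℝ)))) 1 := by
    simpa using hpart 1 one_pos
  have hId : psiMinus χ 1 + psiPlus χ 1 + χ 1 = 1 := kernel_split_aux χ hS hP
  set h : ℤ → ℝ := fun k => χ (Real.exp (-(k : ℝ))) with hh
  set F := Filter.atTop ⊓ Filter.principal {w : ℝ | ∃ m : ℤ, w * Real.log t = (m : ℝ)} with hF
  -- the limit function per index
  set c : ℤ → ℝ := fun j => if (0:ℝ) < (j:ℝ) then fp else if (j:ℝ) < (0:ℝ) then fm else f t with hc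
  set L : ℝ := psiMinus χ 1 * fp + psiPlus χ 1 * fm + χ 1 * f t with hL
  have hB0 : 0 ≤ B := le_trans (abs_nonneg _) (hf t ht)
  -- G tends to L along atTop
  have hG : Filter.Tendsto (fun w => ∑' j : ℤ, h j * f (t * Real.exp ((j:ℝ)/w)))
      Filter.atTop (nhds (∑' j : ℤ, h j * c j)) := by
    refine tendsto_tsum_of_dominated_convergence (bound := fun k => |h k| * B)
      (hS.mul_right B) (fun j => ?_) ?_
    · -- per-term convergence
      rcases lt_trichotomy (j:ℝ) 0 with hj | hj | hj
      · have hj' : j < 0 := by exact_mod_cast hj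
        have hcj : c j = fm := by
          simp [hc, hj, hj', not_lt_of_gt hj, not_lt_of_gt hj']
        rw [hcj]
        refine Filter.Tendsto.const_mul _ (hfm.comp ?_)
        refine tendsto_nhdsWithin_of_tendsto_nhds_of_eventually_within _ ?_ ?_
        · have h1 : Filter.Tendsto (fun w : ℝ => (j:ℝ) / w) Filter.atTop (nhds 0) := by
            simpa [div_eq_mul_inv] using tendsto_inv_atTop_zero.const_mul (j:ℝ)
          have h2 : Filter.Tendsto (fun w : ℝ => Real.exp ((j:ℝ)/w)) Filter.atTop (nhds 1) := by
            simpa [Function.comp_def] using (Real.continuous_exp.tendsto 0).comp h1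
          simpa using h2.const_mul t
        · filter_upwards [Filter.eventually_gt_atTop (0:ℝ)] with w hw
          have : (j:ℝ)/w < 0 := div_neg_of_neg_of_pos hj hw
          have : Real.exp ((j:ℝ)/w) < 1 := by
            rw [← Real.exp_zero]; exact Real.exp_lt_exp.mpr this
          have : t * Real.exp ((j:ℝ)/w) < t := by nlinarith
          exact this
      · have hj0 : j = 0 := by exact_mod_cast hj
        have hcj : c j = f t := by simp [hc, hj0]
        rw [hcj]
        have : ∀ w : ℝ, h j * f (t * Real.exp ((j:ℝ)/w)) = h j * f t := by
          intro w; simp [hj0]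
        simpa [this] using tendsto_const_nhds
      · have hj' : 0 < j := by exact_mod_cast hj
        have hcj : c j = fp := by simp [hc, hj, hj']
        rw [hcj]
        refine Filter.Tendsto.const_mul _ (hfp.comp ?_)
        refine tendsto_nhdsWithin_of_tendsto_nhds_of_eventually_within _ ?_ ?_
        · have h1 : Filter.Tendsto (fun w : ℝ => (j:ℝ) / w) Filter.atTop (nhds 0) := by
            simpa [div_eq_mul_inv] using tendsto_inv_atTop_zero.const_mul (j:ℝ)
          have h2 : Filter.Tendsto (fun w : ℝ => Real.exp ((j:ℝ)/w)) Filter.atTop (nhds 1) := by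
            simpa [Function.comp_def] using (Real.continuous_exp.tendsto 0).comp h1
          simpa using h2.const_mul t
        · filter_upwards [Filter.eventually_gt_atTop (0:ℝ)] with w hw
          have : (0:ℝ) < (j:ℝ)/w := div_pos hj hw
          have : 1 < Real.exp ((j:ℝ)/w) := by
            rw [← Real.exp_zero]; exact Real.exp_lt_exp.mpr this
          have : t < t * Real.exp ((j:ℝ)/w) := by nlinarith
          exact this
    · refine Filter.Eventually.of_forall fun w => fun k => ?_
      have hpos : 0 < t * Real.exp ((k:ℝ)/w) := mul_pos ht (Real.exp_pos _)
      calc ‖h k * f (t * Real.exp ((k:ℝ)/w))‖ = |h k| * |f (t * Real.exp ((k:ℝ)/w))| := by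
            rw [Real.norm_eq_abs, abs_mul]
        _ ≤ |h k| * B := mul_le_mul_of_nonneg_left (hf _ hpos) (abs_nonneg _)
  -- identify the limit value
  have hmS : Summable fun k : ℤ => if (0:ℝ) < (k:ℝ) then h k else 0 := by
    refine Summable.of_norm_bounded hS fun k => ?_
    by_cases hk : (0:ℝ) < (k:ℝ) <;> simp [hk, Real.norm_eq_abs, abs_nonneg, hh]
  have hpS : Summable fun k : ℤ => if (k:ℝ) < (0:ℝ) then h k else 0 := by
    refine Summable.of_norm_bounded hS fun k => ?_
    by_cases hk : (k:ℝ) < (0:ℝ) <;> simp [hk, Real.norm_eq_abs, abs_nonneg, hh]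
  have h0S : Summable fun k : ℤ => if k = (0:ℤ) then χ 1 * f t else 0 :=
    summable_of_ne_finset_zero (s := {0}) (by intro k hk; simp at hk; simp [hk])
  have hLval : ∑' j : ℤ, h j * c j = L := by
    have key : ∀ k : ℤ, h k * c k = (if (0:ℝ) < (k:ℝ) then h k else 0) * fp
        + (if (k:ℝ) < (0:ℝ) then h k else 0) * fm
        + (if k = (0:ℤ) then χ 1 * f t else 0) := by
      intro k
      rcases lt_trichotomy (k:ℝ) 0 with hk | hk | hk
      · have hk' : k < 0 := by exact_mod_cast hk
        have hne : k ≠ 0 := ne_of_lt hk'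
        simp [hc, hk, hk', not_lt_of_gt hk, not_lt_of_gt hk', hne]
      · have : k = 0 := by exact_mod_cast hk
        simp [this, hc, hh]
      · have hk' : 0 < k := by exact_mod_cast hk
        have hne : k ≠ 0 := (ne_of_lt hk').symm
        simp [hc, hk, hk', not_lt_of_gt hk, not_lt_of_gt hk', hne]
    calc ∑' j : ℤ, h j * c j
        = (∑' k : ℤ, (if (0:ℝ) < (k:ℝ) then h k else 0) * fp)
          + (∑' k : ℤ, (if (k:ℝ) < (0:ℝ) then h k else 0) * fm)
          + (∑' k : ℤ, if k = (0:ℤ) then χ 1 * f t else 0) := by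
          rw [← Summable.tsum_add (hmS.mul_right fp) (hpS.mul_right fm),
            ← Summable.tsum_add ((hmS.mul_right fp).add (hpS.mul_right fm)) h0S]
          exact tsum_congr key
      _ = L := by
          rw [tsum_mul_right, tsum_mul_right, tsum_ite_eq (0:ℤ), hL]
          congr 2
          · congr 1
            rw [psiMinus]; refine (tsum_congr fun k => ?_)
            simp [Real.log_one, hh]
          · congr 1
            rw [psiPlus]; refine (tsum_congr fun k => ?_)
            simp [Real.log_one, hh]
  rw [hLval] at hG
  -- expSamp agrees with G eventually on F
  have hEq : ∀ᶠ w in F, expSamp χ f w t = ∑' j : ℤ, h j * f (t * Real.exp ((j:ℝ)/w)) := by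
    have h1 : ∀ᶠ w in F, (1:ℝ) ≤ w :=
      (Filter.eventually_ge_atTop (1:ℝ)).filter_mono inf_le_left
    have h2 : ∀ᶠ w in F, ∃ m : ℤ, w * Real.log t = (m : ℝ) :=
      Filter.eventually_inf_principal.mpr (Filter.Eventually.of_forall fun w hw => hw)
    filter_upwards [h1, h2] with w hw ⟨m, hm⟩
    have hw0 : (0:ℝ) < w := lt_of_lt_of_le one_pos hw
    have htw : t ^ w = Real.exp (m : ℝ) := by
      rw [Real.rpow_def_of_pos ht, mul_comm, hm]
    have hmw : (m : ℝ) / w = Real.log t := by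
      rw [← hm, mul_comm, mul_div_assoc, div_self (ne_of_gt hw0), mul_one]
    have : expSamp χ f w t = ∑' k : ℤ, χ (Real.exp (-(k:ℝ) + (m:ℝ))) * f (Real.exp ((k:ℝ)/w)) := by
      rw [expSamp]
      refine tsum_congr fun k => ?_
      rw [htw, ← Real.exp_add]
    rw [this]
    rw [← (Equiv.addRight m).tsum_eq
      (fun k : ℤ => χ (Real.exp (-(k:ℝ) + (m:ℝ))) * f (Real.exp ((k:ℝ)/w)))]
    refine (tsum_congr fun j => ?_).symm
    have e1 : ((Equiv.addRight m) j : ℤ) = j + m := rfl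
    rw [e1]
    push_cast
    have e2 : (-((j:ℝ) + (m:ℝ)) + (m:ℝ)) = -(j:ℝ) := by ring
    have e3 : ((j:ℝ) + (m:ℝ)) / w = (j:ℝ)/w + (m:ℝ)/w := by ring
    rw [e2, e3, hmw, Real.exp_add, Real.exp_log ht, mul_comm (Real.exp ((j:ℝ)/w)) t]
  have hE : Filter.Tendsto (fun w => expSamp χ f w t) F (nhds L) :=
    (hG.mono_left inf_le_left).congr' (by filter_upwards [hEq] with w e using e.symm)
  constructor
  · constructor
    · intro htend
      have huniq : α * fp + (1 - α - χ 1) * fm + χ 1 * f t = L :=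
        tendsto_nhds_unique htend hE
      have hps : psiPlus χ 1 = 1 - psiMinus χ 1 - χ 1 := by linarith
      rw [hL, hps] at huniq
      have hz : (α - psiMinus χ 1) * (fp - fm) = 0 := by ring_nf; nlinarith [huniq]
      rcases mul_eq_zero.mp hz with hz1 | hz2
      · linarith
      · exact absurd (sub_eq_zero.mp hz2) hjump
    · intro hα
      have hps : psiPlus χ 1 = 1 - α - χ 1 := by linarith
      have : L = α * fp + (1 - α - χ 1) * fm + χ 1 * f t := by rw [hL, hα, hps]
      rwa [this] at hE
  · constructor <;> intro hx <;> linarith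
end

section
/- Let χ be a kernel and f: ℝ⁺ → ℝ a bounded function with a non-removable jump discontinuity at t ∈ ℝ⁺. For α ∈ ℝ, the following are equivalent: (i) lim_{w→∞, w·log t ∉ ℤ} (S_w^χ f)(t) = α f(t+0) + (1-α) f(t-0); (ii) ψ_χ⁻(u) = α for all u ∈ (1, e); (iii) ψ_χ⁺(u) = 1 - α for all u ∈ (1, e). -/
open Real Filter Set MeasureTheory

section Helpers

variable {χ : ℝ → ℝ} {ν C : ℝ}

lemma exp_arg (x k : ℝ) : Real.exp (-k) * Real.exp x = Real.exp (x - k) := by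
  rw [← Real.exp_add]; ring_nf

lemma sum_abs_exp (h1 : ∀ u : ℝ, 0 < u → Summable fun k : ℤ => |χ (Real.exp (-(k : ℝ)) * u)|)
    (x : ℝ) : Summable fun k : ℤ => |χ (Real.exp (x - (k : ℝ)))| := by
  have := h1 (Real.exp x) (Real.exp_pos x)
  simpa only [exp_arg] using this

lemma mom_exp (hmom : ∀ u : ℝ, 0 < u →
      (Summable fun k : ℤ => |χ (Real.exp (-(k : ℝ)) * u)| * |(k : ℝ) - Real.log u| ^ ν) ∧
      ∑' k : ℤ, |χ (Real.exp (-(k : ℝ)) * u)| * |(k : ℝ) - Real.log u| ^ ν ≤ C)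
    (x : ℝ) :
    (Summable fun k : ℤ => |χ (Real.exp (x - (k : ℝ)))| * |(k : ℝ) - x| ^ ν) ∧
    ∑' k : ℤ, |χ (Real.exp (x - (k : ℝ)))| * |(k : ℝ) - x| ^ ν ≤ C := by
  have := hmom (Real.exp x) (Real.exp_pos x)
  simpa only [exp_arg, Real.log_exp] using this

lemma summable_ite_chi (h1 : ∀ u : ℝ, 0 < u → Summable fun k : ℤ => |χ (Real.exp (-(k : ℝ)) * u)|)
    {u : ℝ} (hu : 0 < u) (P : ℤ → Prop) [DecidablePred P] :
    Summable fun k : ℤ => if P k then χ (u * Real.exp (-(k : ℝ))) else 0 := by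
  have hs : Summable fun k : ℤ => |χ (u * Real.exp (-(k : ℝ)))| := by
    simpa only [mul_comm] using h1 u hu
  apply Summable.of_abs
  apply hs.of_nonneg_of_le (fun k => abs_nonneg _)
  intro k
  split_ifs with h
  · exact le_rfl
  · simpa using abs_nonneg (χ (u * Real.exp (-(k : ℝ))))

lemma intcast_ne_of_Ioo01 {y : ℝ} (h0 : 0 < y) (h1 : y < 1) (k : ℤ) : (k : ℝ) ≠ y := by
  intro h
  have hk0 : (0 : ℤ) < k := by exact_mod_cast h ▸ h0
  have hk1 : (k : ℝ) < 1 := h ▸ h1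
  have : k < 1 := by exact_mod_cast hk1
  omega

lemma psi_add (h1 : ∀ u : ℝ, 0 < u → Summable fun k : ℤ => |χ (Real.exp (-(k : ℝ)) * u)|)
    (h2 : ∀ u : ℝ, 0 < u → HasSum (fun k : ℤ => χ (Real.exp (-(k : ℝ)) * u)) 1)
    {u : ℝ} (hu1 : 1 < u) (hue : u < Real.exp 1) :
    psiMinus χ u + psiPlus χ u = 1 := by
  have hu0 : (0 : ℝ) < u := lt_trans one_pos hu1
  have hl0 : 0 < Real.log u := Real.log_pos hu1
  have hl1 : Real.log u < 1 := by
    have := Real.log_lt_log hu0 hue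
    simpa using this
  have hm := summable_ite_chi h1 hu0 (fun k : ℤ => Real.log u < (k : ℝ))
  have hp := summable_ite_chi h1 hu0 (fun k : ℤ => (k : ℝ) < Real.log u)
  have key : ∀ k : ℤ, ((if Real.log u < (k : ℝ) then χ (u * Real.exp (-(k : ℝ))) else 0)
      + (if (k : ℝ) < Real.log u then χ (u * Real.exp (-(k : ℝ))) else 0))
      = χ (Real.exp (-(k : ℝ)) * u) := by
    intro k
    rcases lt_trichotomy ((k : ℝ)) (Real.log u) with h | h | h
    · rw [if_neg (by linarith), if_pos h, mul_comm]; ring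
    · exact absurd h (intcast_ne_of_Ioo01 hl0 hl1 k)
    · rw [if_pos h, if_neg (by linarith), mul_comm]; ring
  have := (Summable.tsum_add hm hp).symm
  calc psiMinus χ u + psiPlus χ u
      = ∑' k : ℤ, ((if Real.log u < (k : ℝ) then χ (u * Real.exp (-(k : ℝ))) else 0)
        + (if (k : ℝ) < Real.log u then χ (u * Real.exp (-(k : ℝ))) else 0)) := this
    _ = ∑' k : ℤ, χ (Real.exp (-(k : ℝ)) * u) := tsum_congr key
    _ = 1 := (h2 u hu0).tsum_eq

lemma psiMinus_reindex (χ : ℝ → ℝ) (x : ℝ) :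
    psiMinus χ (Real.exp (x - (⌊x⌋ : ℝ))) =
      ∑' k : ℤ, if x < (k : ℝ) then χ (Real.exp (x - (k : ℝ))) else 0 := by
  rw [psiMinus,
    ← (Equiv.addLeft (⌊x⌋ : ℤ)).tsum_eq
      (fun k : ℤ => if x < (k : ℝ) then χ (Real.exp (x - (k : ℝ))) else 0)]
  apply tsum_congr
  intro j
  have harg : Real.exp (x - (⌊x⌋ : ℝ)) * Real.exp (-(j : ℝ))
      = Real.exp (x - ((⌊x⌋ + j : ℤ) : ℝ)) := by
    rw [← Real.exp_add]; push_cast; ring_nf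
  simp only [Equiv.coe_addLeft, Real.log_exp, harg]
  have hcond : (x - (⌊x⌋ : ℝ) < (j : ℝ)) ↔ (x < ((⌊x⌋ + j : ℤ) : ℝ)) := by
    push_cast; constructor <;> intro <;> linarith
  by_cases h : x - (⌊x⌋ : ℝ) < (j : ℝ)
  · exact if_congr hcond rfl rfl
  · exact if_congr hcond rfl rfl

lemma psiPlus_reindex (χ : ℝ → ℝ) (x : ℝ) :
    psiPlus χ (Real.exp (x - (⌊x⌋ : ℝ))) =
      ∑' k : ℤ, if (k : ℝ) < x then χ (Real.exp (x - (k : ℝ))) else 0 := by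
  rw [psiPlus,
    ← (Equiv.addLeft (⌊x⌋ : ℤ)).tsum_eq
      (fun k : ℤ => if (k : ℝ) < x then χ (Real.exp (x - (k : ℝ))) else 0)]
  apply tsum_congr
  intro j
  have harg : Real.exp (x - (⌊x⌋ : ℝ)) * Real.exp (-(j : ℝ))
      = Real.exp (x - ((⌊x⌋ + j : ℤ) : ℝ)) := by
    rw [← Real.exp_add]; push_cast; ring_nf
  simp only [Equiv.coe_addLeft, Real.log_exp, harg]
  have hcond : ((j : ℝ) < x - (⌊x⌋ : ℝ)) ↔ (((⌊x⌋ + j : ℤ) : ℝ) < x) := by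
    push_cast; constructor <;> intro <;> linarith
  by_cases h : (j : ℝ) < x - (⌊x⌋ : ℝ)
  · exact if_congr hcond rfl rfl
  · exact if_congr hcond rfl rfl

lemma tail_bound (h1 : ∀ u : ℝ, 0 < u → Summable fun k : ℤ => |χ (Real.exp (-(k : ℝ)) * u)|)
    (hν : 0 < ν)
    (hmom : ∀ u : ℝ, 0 < u →
      (Summable fun k : ℤ => |χ (Real.exp (-(k : ℝ)) * u)| * |(k : ℝ) - Real.log u| ^ ν) ∧
      ∑' k : ℤ, |χ (Real.exp (-(k : ℝ)) * u)| * |(k : ℝ) - Real.log u| ^ ν ≤ C)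
    {u : ℝ} (hu : 0 < u) (P : ℤ → Prop) [DecidablePred P] (b : ℤ)
    (hP : ∀ k : ℤ, k ≠ b → P k → 1 ≤ |(k : ℝ) - Real.log u|) :
    |∑' k : ℤ, if k = b then 0 else (if P k then χ (u * Real.exp (-(k : ℝ))) else 0)| ≤ C := by
  have hmm := hmom u hu
  have hbound : ∀ k : ℤ, |if k = b then 0 else (if P k then χ (u * Real.exp (-(k : ℝ))) else 0)|
      ≤ |χ (Real.exp (-(k : ℝ)) * u)| * |(k : ℝ) - Real.log u| ^ ν := by
    intro k
    have hnn : (0 : ℝ) ≤ |χ (Real.exp (-(k : ℝ)) * u)| * |(k : ℝ) - Real.log u| ^ ν :=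
      mul_nonneg (abs_nonneg _) (Real.rpow_nonneg (abs_nonneg _) ν)
    split_ifs with h hp
    · simpa using hnn
    · rw [mul_comm u]
      exact le_mul_of_one_le_right (abs_nonneg _) (Real.one_le_rpow (hP k h hp) hν.le)
    · simpa using hnn
  have hsn : Summable fun k : ℤ =>
      |if k = b then 0 else (if P k then χ (u * Real.exp (-(k : ℝ))) else 0)| :=
    hmm.1.of_nonneg_of_le (fun k => abs_nonneg _) hbound
  calc |∑' k : ℤ, if k = b then 0 else (if P k then χ (u * Real.exp (-(k : ℝ))) else 0)|
      ≤ ∑' k : ℤ, |if k = b then 0 else (if P k then χ (u * Real.exp (-(k : ℝ))) else 0)| := by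
        simpa [Real.norm_eq_abs] using
          norm_tsum_le_tsum_norm (f := fun k : ℤ =>
            if k = b then 0 else (if P k then χ (u * Real.exp (-(k : ℝ))) else 0)) (by
              simpa [Real.norm_eq_abs] using hsn)
    _ ≤ ∑' k : ℤ, |χ (Real.exp (-(k : ℝ)) * u)| * |(k : ℝ) - Real.log u| ^ ν :=
        Summable.tsum_le_tsum hbound hsn hmm.1
    _ ≤ C := hmm.2

end Helpers

section ChiBound

variable {χ : ℝ → ℝ} {ν C α : ℝ}

lemma chi_bound (h1 : ∀ u : ℝ, 0 < u → Summable fun k : ℤ => |χ (Real.exp (-(k : ℝ)) * u)|)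
    (h2 : ∀ u : ℝ, 0 < u → HasSum (fun k : ℤ => χ (Real.exp (-(k : ℝ)) * u)) 1)
    (hν : 0 < ν)
    (hmom : ∀ u : ℝ, 0 < u →
      (Summable fun k : ℤ => |χ (Real.exp (-(k : ℝ)) * u)| * |(k : ℝ) - Real.log u| ^ ν) ∧
      ∑' k : ℤ, |χ (Real.exp (-(k : ℝ)) * u)| * |(k : ℝ) - Real.log u| ^ ν ≤ C)
    (Hm : ∀ u ∈ Set.Ioo (1 : ℝ) (Real.exp 1), psiMinus χ u = α)
    {v : ℝ} (hv1 : Real.exp (-1) < v) (hv2 : v < Real.exp 1) (hv3 : v ≠ 1) :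
    |χ v| ≤ |α| + |1 - α| + C := by
  have hv0 : (0 : ℝ) < v := lt_trans (Real.exp_pos _) hv1
  rcases lt_or_gt_of_ne hv3 with hlt | hgt
  · -- case v < 1 : use psiMinus at u = e * v
    set u : ℝ := Real.exp 1 * v with hu
    have hu1 : 1 < u := by
      have := (mul_lt_mul_iff_right₀ (Real.exp_pos 1)).mpr hv1
      rwa [← Real.exp_add, add_neg_cancel, Real.exp_zero] at this
    have hue : u < Real.exp 1 := by
      have := (mul_lt_mul_iff_right₀ (Real.exp_pos 1)).mpr hlt
      simpa using this
    have hu0 : (0 : ℝ) < u := lt_trans one_pos hu1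
    have hlogu : Real.log u = 1 + Real.log v := by
      rw [hu, Real.log_mul (Real.exp_ne_zero 1) (ne_of_gt hv0), Real.log_exp]
    have hlv0 : Real.log v < 0 := Real.log_neg hv0 hlt
    have hlv1 : -1 < Real.log v := by
      have := Real.log_lt_log (Real.exp_pos (-1)) hv1
      simpa using this
    have hsM := summable_ite_chi h1 hu0 (fun k : ℤ => Real.log u < (k : ℝ))
    have hsplit := Summable.tsum_eq_add_tsum_ite hsM 1
    have hterm : (if Real.log u < ((1 : ℤ) : ℝ) then χ (u * Real.exp (-((1 : ℤ) : ℝ))) else 0)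
        = χ v := by
      rw [if_pos (by rw [hlogu]; push_cast; linarith)]
      congr 1
      rw [hu]
      push_cast
      rw [mul_comm (Real.exp 1) v, mul_assoc, ← Real.exp_add]
      simp
    have hpm : psiMinus χ u = α := Hm u ⟨hu1, hue⟩
    have htail : |∑' k : ℤ, if k = 1 then 0
        else (if Real.log u < (k : ℝ) then χ (u * Real.exp (-(k : ℝ))) else 0)| ≤ C := by
      apply tail_bound h1 hν hmom hu0 (fun k : ℤ => Real.log u < (k : ℝ)) 1
      intro k hk hP
      have hk2 : (2 : ℤ) ≤ k := by
        have hk0 : (0 : ℝ) < (k : ℝ) := lt_trans (by rw [hlogu]; linarith) hP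
        have : (0 : ℤ) < k := by exact_mod_cast hk0
        omega
      have h2k : (2 : ℝ) ≤ (k : ℝ) := by exact_mod_cast hk2
      rw [abs_of_pos (by linarith [hP])]
      rw [hlogu]
      have := Real.log_lt_log hv0 hv2
      rw [Real.log_exp] at this
      linarith
    have hχv : χ v = α - ∑' k : ℤ, if k = 1 then 0
        else (if Real.log u < (k : ℝ) then χ (u * Real.exp (-(k : ℝ))) else 0) := by
      have h' : psiMinus χ u = χ v + ∑' k : ℤ, if k = 1 then 0
          else (if Real.log u < (k : ℝ) then χ (u * Real.exp (-(k : ℝ))) else 0) := by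
        rw [psiMinus, hsplit, hterm]
      rw [hpm] at h'
      linarith
    rw [hχv]
    calc |α - _| ≤ |α| + |∑' k : ℤ, if k = 1 then 0
          else (if Real.log u < (k : ℝ) then χ (u * Real.exp (-(k : ℝ))) else 0)| := abs_sub _ _
      _ ≤ |α| + C := by linarith
      _ ≤ |α| + |1 - α| + C := by have := abs_nonneg (1 - α); linarith
  · -- case 1 < v : use psiPlus at v
    have hpm : psiMinus χ v = α := Hm v ⟨hgt, hv2⟩
    have hpp : psiPlus χ v = 1 - α := by
      have := psi_add h1 h2 hgt hv2
      linarith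
    have hlv0 : 0 < Real.log v := Real.log_pos hgt
    have hlv1 : Real.log v < 1 := by
      have := Real.log_lt_log hv0 hv2
      simpa using this
    have hsP := summable_ite_chi h1 hv0 (fun k : ℤ => (k : ℝ) < Real.log v)
    have hsplit := Summable.tsum_eq_add_tsum_ite hsP 0
    have hterm : (if ((0 : ℤ) : ℝ) < Real.log v then χ (v * Real.exp (-((0 : ℤ) : ℝ))) else 0)
        = χ v := by
      rw [if_pos (by push_cast; linarith)]
      norm_num
    have htail : |∑' k : ℤ, if k = 0 then 0
        else (if (k : ℝ) < Real.log v then χ (v * Real.exp (-(k : ℝ))) else 0)| ≤ C := by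
      apply tail_bound h1 hν hmom hv0 (fun k : ℤ => (k : ℝ) < Real.log v) 0
      intro k hk hP
      have hk1 : k ≤ -1 := by
        have : k < 1 := by exact_mod_cast lt_trans hP hlv1
        omega
      have h1k : (k : ℝ) ≤ -1 := by exact_mod_cast hk1
      rw [abs_of_neg (by linarith [hP])]
      linarith
    have hχv : χ v = (1 - α) - ∑' k : ℤ, if k = 0 then 0
        else (if (k : ℝ) < Real.log v then χ (v * Real.exp (-(k : ℝ))) else 0) := by
      have h' : psiPlus χ v = χ v + ∑' k : ℤ, if k = 0 then 0
          else (if (k : ℝ) < Real.log v then χ (v * Real.exp (-(k : ℝ))) else 0) := by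
        rw [psiPlus, hsplit, hterm]
      rw [hpp] at h'
      linarith
    rw [hχv]
    calc |(1 - α) - _| ≤ |1 - α| + |∑' k : ℤ, if k = 0 then 0
          else (if (k : ℝ) < Real.log v then χ (v * Real.exp (-(k : ℝ))) else 0)| := abs_sub _ _
      _ ≤ |1 - α| + C := by linarith
      _ ≤ |α| + |1 - α| + C := by have := abs_nonneg α; linarith

end ChiBound

section Main

variable {χ f : ℝ → ℝ} {ν C α B t fp fm : ℝ}

lemma fract_mem {x : ℝ} (hx : ∀ m : ℤ, x ≠ (m : ℝ)) :
    0 < x - (⌊x⌋ : ℝ) ∧ x - (⌊x⌋ : ℝ) < 1 := by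
  constructor
  · rcases lt_or_eq_of_le (Int.floor_le x) with h | h
    · linarith
    · exact absurd h.symm (hx ⌊x⌋)
  · have := Int.lt_floor_add_one x
    linarith

lemma hasSum_min (h1 : ∀ u : ℝ, 0 < u → Summable fun k : ℤ => |χ (Real.exp (-(k : ℝ)) * u)|)
    (Hm : ∀ u ∈ Set.Ioo (1 : ℝ) (Real.exp 1), psiMinus χ u = α)
    {x : ℝ} (hx : ∀ m : ℤ, x ≠ (m : ℝ)) :
    HasSum (fun k : ℤ => if x < (k : ℝ) then χ (Real.exp (x - (k : ℝ))) else 0) α := by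
  have hfr := fract_mem hx
  have hu1 : 1 < Real.exp (x - (⌊x⌋ : ℝ)) := by
    rw [← Real.exp_zero]
    exact Real.exp_lt_exp.mpr hfr.1
  have hue : Real.exp (x - (⌊x⌋ : ℝ)) < Real.exp 1 := Real.exp_lt_exp.mpr hfr.2
  have hs : Summable (fun k : ℤ => if x < (k : ℝ) then χ (Real.exp (x - (k : ℝ))) else 0) := by
    apply Summable.of_abs
    apply (sum_abs_exp h1 x).of_nonneg_of_le (fun k => abs_nonneg _)
    intro k
    split_ifs with h
    · exact le_rfl
    · simpa using abs_nonneg (χ (Real.exp (x - (k : ℝ))))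
  refine (Summable.hasSum_iff hs).mpr ?_
  rw [← psiMinus_reindex χ x]
  exact Hm _ ⟨hu1, hue⟩

lemma hasSum_plus (h1 : ∀ u : ℝ, 0 < u → Summable fun k : ℤ => |χ (Real.exp (-(k : ℝ)) * u)|)
    (h2 : ∀ u : ℝ, 0 < u → HasSum (fun k : ℤ => χ (Real.exp (-(k : ℝ)) * u)) 1)
    (Hm : ∀ u ∈ Set.Ioo (1 : ℝ) (Real.exp 1), psiMinus χ u = α)
    {x : ℝ} (hx : ∀ m : ℤ, x ≠ (m : ℝ)) :
    HasSum (fun k : ℤ => if (k : ℝ) < x then χ (Real.exp (x - (k : ℝ))) else 0) (1 - α) := by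
  have hfr := fract_mem hx
  have hu1 : 1 < Real.exp (x - (⌊x⌋ : ℝ)) := by
    rw [← Real.exp_zero]
    exact Real.exp_lt_exp.mpr hfr.1
  have hue : Real.exp (x - (⌊x⌋ : ℝ)) < Real.exp 1 := Real.exp_lt_exp.mpr hfr.2
  have hs : Summable (fun k : ℤ => if (k : ℝ) < x then χ (Real.exp (x - (k : ℝ))) else 0) := by
    apply Summable.of_abs
    apply (sum_abs_exp h1 x).of_nonneg_of_le (fun k => abs_nonneg _)
    intro k
    split_ifs with h
    · exact le_rfl
    · simpa using abs_nonneg (χ (Real.exp (x - (k : ℝ))))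
  refine (Summable.hasSum_iff hs).mpr ?_
  rw [← psiPlus_reindex χ x]
  have := psi_add h1 h2 hu1 hue
  have hm := Hm _ ⟨hu1, hue⟩
  linarith

set_option maxHeartbeats 2000000 in
lemma backward (h1 : ∀ u : ℝ, 0 < u → Summable fun k : ℤ => |χ (Real.exp (-(k : ℝ)) * u)|)
    (h2 : ∀ u : ℝ, 0 < u → HasSum (fun k : ℤ => χ (Real.exp (-(k : ℝ)) * u)) 1)
    (hν : 0 < ν)
    (hmom : ∀ u : ℝ, 0 < u →
      (Summable fun k : ℤ => |χ (Real.exp (-(k : ℝ)) * u)| * |(k : ℝ) - Real.log u| ^ ν) ∧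
      ∑' k : ℤ, |χ (Real.exp (-(k : ℝ)) * u)| * |(k : ℝ) - Real.log u| ^ ν ≤ C)
    (hf : ∀ x : ℝ, 0 < x → |f x| ≤ B) (ht : 0 < t)
    (hfp : Filter.Tendsto f (nhdsWithin t (Set.Ioi t)) (nhds fp))
    (hfm : Filter.Tendsto f (nhdsWithin t (Set.Iio t)) (nhds fm))
    (Hm : ∀ u ∈ Set.Ioo (1 : ℝ) (Real.exp 1), psiMinus χ u = α) :
    Filter.Tendsto (fun w => expSamp χ f w t)
        (Filter.atTop ⊓ Filter.principal {w : ℝ | ∀ m : ℤ, w * Real.log t ≠ (m : ℝ)})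
        (nhds (α * fp + (1 - α) * fm)) := by
  have hC0 : 0 ≤ C :=
    le_trans (tsum_nonneg fun k => mul_nonneg (abs_nonneg _) (Real.rpow_nonneg (abs_nonneg _) ν))
      (hmom 1 one_pos).2
  obtain ⟨K, hKeq, hK0⟩ : ∃ K : ℝ, K = |α| + |1 - α| + C ∧ 0 ≤ K :=
    ⟨|α| + |1 - α| + C, rfl, by positivity⟩
  obtain ⟨D, hDeq, hDfp, hDfm, hD0⟩ : ∃ D : ℝ, D = |fp| + |fm| ∧ |fp| ≤ D ∧ |fm| ≤ D ∧ 0 ≤ D :=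
    ⟨|fp| + |fm|, rfl, by linarith [abs_nonneg fm], by linarith [abs_nonneg fp], by positivity⟩
  have hB0 : 0 ≤ B := le_trans (abs_nonneg _) (hf t ht)
  rw [Metric.tendsto_nhds]
  intro ε' hε'
  obtain ⟨ε, hεpos, hεfinal⟩ : ∃ ε : ℝ, 0 < ε ∧ ε * (2 * K + 2 * C) < ε' := by
    refine ⟨ε' / (2 * K + 2 * C + 1), by positivity, ?_⟩
    rw [div_mul_eq_mul_div, div_lt_iff₀ (by linarith : (0:ℝ) < 2 * K + 2 * C + 1)]
    nlinarith [hε', hK0, hC0]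
  -- choose N
  obtain ⟨N, hN1, hNν0, hNb⟩ : ∃ N : ℝ, 1 ≤ N ∧ 0 < N ^ ν ∧ (B + D) / N ^ ν ≤ ε := by
    have hR1 : (1 : ℝ) ≤ max 1 ((B + D) / ε) := le_max_left _ _
    have hR0 : (0 : ℝ) < max 1 ((B + D) / ε) := lt_of_lt_of_le one_pos hR1
    refine ⟨(max 1 ((B + D) / ε)) ^ (1 / ν), Real.one_le_rpow hR1 (by positivity), ?_, ?_⟩
    · rw [← Real.rpow_mul hR0.le, one_div_mul_cancel (ne_of_gt hν), Real.rpow_one]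
      exact hR0
    · rw [← Real.rpow_mul hR0.le, one_div_mul_cancel (ne_of_gt hν), Real.rpow_one,
        div_le_iff₀ hR0]
      calc B + D = ε * ((B + D) / ε) := by field_simp
        _ ≤ ε * max 1 ((B + D) / ε) := mul_le_mul_of_nonneg_left (le_max_right _ _) hεpos.le
  -- choose δ's
  obtain ⟨δ₁, hδ₁pos, hδ₁⟩ := Metric.tendsto_nhdsWithin_nhds.mp hfp ε hεpos
  obtain ⟨δ₂, hδ₂pos, hδ₂⟩ := Metric.tendsto_nhdsWithin_nhds.mp hfm ε hεpos
  obtain ⟨lam, hlam, hlamexp⟩ : ∃ lam : ℝ, 0 < lam ∧ Real.exp lam = 1 + δ₁ / t :=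
    ⟨Real.log (1 + δ₁ / t), Real.log_pos (by rw [lt_add_iff_pos_right]; positivity),
      Real.exp_log (by positivity)⟩
  rw [Filter.eventually_inf_principal]
  filter_upwards [eventually_ge_atTop (max (max 1 (N / lam + 1)) (t * N / δ₂ + 1))]
    with w hw hwS
  have hw1 : (1 : ℝ) ≤ w := le_trans (le_trans (le_max_left _ _) (le_max_left _ _)) hw
  have hw0 : (0 : ℝ) < w := lt_of_lt_of_le one_pos hw1
  have hwlam : N / lam < w :=
    lt_of_lt_of_le (by linarith) (le_trans (le_trans (le_max_right _ _) (le_max_left _ _)) hw)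
  have hwδ₂ : t * N / δ₂ < w := lt_of_lt_of_le (by linarith) (le_trans (le_max_right _ _) hw)
  obtain ⟨x, hxdef⟩ : ∃ x : ℝ, x = w * Real.log t := ⟨_, rfl⟩
  have hx : ∀ m : ℤ, x ≠ (m : ℝ) := by rw [hxdef]; exact hwS
  obtain ⟨a, ha⟩ : ∃ a : ℤ, a = ⌊x⌋ := ⟨⌊x⌋, rfl⟩
  have hfr : 0 < x - (a : ℝ) ∧ x - (a : ℝ) < 1 := by
    rw [ha]
    exact fract_mem hx
  -- near-term χ bounds
  have hχa : |χ (Real.exp (x - (a : ℝ)))| ≤ K := by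
    rw [hKeq]
    apply chi_bound h1 h2 hν hmom Hm
    · exact Real.exp_lt_exp.mpr (by linarith [hfr.1])
    · exact Real.exp_lt_exp.mpr hfr.2
    · exact ne_of_gt (Real.one_lt_exp_iff.mpr hfr.1)
  have hχa1 : |χ (Real.exp (x - ((a + 1 : ℤ) : ℝ)))| ≤ K := by
    rw [hKeq]
    apply chi_bound h1 h2 hν hmom Hm
    · push_cast
      exact Real.exp_lt_exp.mpr (by linarith [hfr.1])
    · push_cast
      exact Real.exp_lt_exp.mpr (by linarith [hfr.2])
    · push_cast
      exact ne_of_lt (Real.exp_lt_one_iff.mpr (by linarith [hfr.2]))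
  -- main HasSum for the limit
  have hmin := hasSum_min h1 Hm hx
  have hplus := hasSum_plus h1 h2 Hm hx
  have hmain : HasSum (fun k : ℤ => χ (Real.exp (x - (k : ℝ))) * (if x < (k : ℝ) then fp else fm))
      (α * fp + (1 - α) * fm) := by
    have hsum := (hmin.mul_right fp).add (hplus.mul_right fm)
    have heq : (fun k : ℤ => χ (Real.exp (x - (k : ℝ))) * (if x < (k : ℝ) then fp else fm))
        = fun k : ℤ => (if x < (k : ℝ) then χ (Real.exp (x - (k : ℝ))) else 0) * fp
          + (if (k : ℝ) < x then χ (Real.exp (x - (k : ℝ))) else 0) * fm := by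
      funext k
      rcases lt_trichotomy x ((k : ℝ)) with h | h | h
      · rw [if_pos h, if_pos h, if_neg (by linarith)]; ring
      · exact absurd h (hx k)
      · rw [if_neg (by linarith), if_neg (by linarith), if_pos h]; ring
    rw [heq]
    exact hsum
  -- summability of the sampled series
  have hSf : Summable (fun k : ℤ => χ (Real.exp (x - (k : ℝ))) * f (Real.exp ((k : ℝ) / w))) := by
    apply Summable.of_abs
    apply ((sum_abs_exp h1 x).mul_right B).of_nonneg_of_le (fun k => abs_nonneg _)
    intro k
    rw [abs_mul]
    exact mul_le_mul_of_nonneg_left (hf _ (Real.exp_pos _)) (abs_nonneg _)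
  have hES : expSamp χ f w t = ∑' k : ℤ, χ (Real.exp (x - (k : ℝ))) * f (Real.exp ((k : ℝ) / w)) := by
    apply tsum_congr
    intro k
    rw [hxdef, Real.rpow_def_of_pos ht, exp_arg, mul_comm (Real.log t) w]
  -- the majorant
  obtain ⟨M, hM⟩ : ∃ M : ℤ → ℝ, ∀ k : ℤ,
      M k = ((if k = a then ε * K else 0) + (if k = a + 1 then ε * K else 0))
        + (ε + (B + D) / N ^ ν) * (|χ (Real.exp (x - (k : ℝ)))| * |(k : ℝ) - x| ^ ν) :=
    ⟨_, fun k => rfl⟩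
  have hcoef0 : 0 ≤ ε + (B + D) / N ^ ν := by positivity
  have hS3 : Summable (fun k : ℤ =>
      (ε + (B + D) / N ^ ν) * (|χ (Real.exp (x - (k : ℝ)))| * |(k : ℝ) - x| ^ ν)) :=
    ((mom_exp hmom x).1).mul_left _
  have hMeq : M = fun k : ℤ => ((if k = a then ε * K else 0) + (if k = a + 1 then ε * K else 0))
      + (ε + (B + D) / N ^ ν) * (|χ (Real.exp (x - (k : ℝ)))| * |(k : ℝ) - x| ^ ν) :=
    funext hM
  have hMsummable : Summable M := by
    rw [hMeq]
    exact (((hasSum_ite_eq a (ε * K)).summable.add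
      (hasSum_ite_eq (a + 1) (ε * K)).summable)).add hS3
  have hMtsum : ∑' k : ℤ, M k ≤ ε * K + ε * K + (ε + (B + D) / N ^ ν) * C := by
    rw [hMeq, Summable.tsum_add ((hasSum_ite_eq a (ε * K)).summable.add
        (hasSum_ite_eq (a + 1) (ε * K)).summable) hS3,
      Summable.tsum_add (hasSum_ite_eq a (ε * K)).summable (hasSum_ite_eq (a + 1) (ε * K)).summable,
      (hasSum_ite_eq a (ε * K)).tsum_eq, (hasSum_ite_eq (a + 1) (ε * K)).tsum_eq, tsum_mul_left]
    have := (mom_exp hmom x).2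
    nlinarith [hcoef0]
  -- pointwise bound
  have hpt : ∀ k : ℤ, |χ (Real.exp (x - (k : ℝ))) * f (Real.exp ((k : ℝ) / w))
      - χ (Real.exp (x - (k : ℝ))) * (if x < (k : ℝ) then fp else fm)| ≤ M k := by
    intro k
    rw [← mul_sub, abs_mul]
    set c : ℝ := |χ (Real.exp (x - (k : ℝ)))| with hc
    set E : ℝ := |f (Real.exp ((k : ℝ) / w)) - (if x < (k : ℝ) then fp else fm)| with hE
    have hc0 : 0 ≤ c := abs_nonneg _
    have hE0 : 0 ≤ E := abs_nonneg _
    have hEall : E ≤ B + D := by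
      rw [hE]
      calc |f (Real.exp ((k : ℝ) / w)) - (if x < (k : ℝ) then fp else fm)|
          ≤ |f (Real.exp ((k : ℝ) / w))| + |if x < (k : ℝ) then fp else fm| := abs_sub _ _
        _ ≤ B + D := by
            apply add_le_add (hf _ (Real.exp_pos _))
            split_ifs
            · exact hDfp
            · exact hDfm
    have hnear : |(k : ℝ) - x| < N → E ≤ ε := by
      intro hkN
      rw [hE]
      by_cases hxk : x < (k : ℝ)
      · rw [if_pos hxk]
        have hs_eq : Real.exp ((k : ℝ) / w) = t * Real.exp (((k : ℝ) - x) / w) := by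
          rw [← Real.exp_log ht, ← Real.exp_add]
          congr 1
          rw [hxdef]
          field_simp
          ring
        have hexp_pos : 0 < ((k : ℝ) - x) / w := div_pos (by linarith) hw0
        have hs_gt : t < Real.exp ((k : ℝ) / w) := by
          rw [hs_eq]
          nlinarith [Real.one_lt_exp_iff.mpr hexp_pos, ht]
        have hdist : dist (Real.exp ((k : ℝ) / w)) t < δ₁ := by
          rw [Real.dist_eq, abs_of_pos (by linarith)]
          have hlt : ((k : ℝ) - x) / w < lam := by
            rw [div_lt_iff₀ hw0]
            have h1' : (k : ℝ) - x < N := by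
              rw [abs_of_pos (by linarith)] at hkN; exact hkN
            have h2' : N < lam * w := by
              rw [div_lt_iff₀ hlam, mul_comm] at hwlam
              linarith [hwlam]
            linarith
          have := Real.exp_lt_exp.mpr hlt
          rw [hlamexp] at this
          rw [hs_eq]
          calc t * Real.exp (((k : ℝ) - x) / w) - t < t * (1 + δ₁ / t) - t := by nlinarith
            _ = δ₁ := by field_simp; ring
        have := hδ₁ (Set.mem_Ioi.mpr hs_gt) hdist
        rw [Real.dist_eq] at this
        linarith
      · have hkx : (k : ℝ) < x := by
          rcases lt_or_eq_of_le (not_lt.mp hxk) with h | h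
          · exact h
          · exact absurd h.symm (hx k)
        rw [if_neg hxk]
        have hs_eq : Real.exp ((k : ℝ) / w) = t * Real.exp (-((x - (k : ℝ)) / w)) := by
          rw [← Real.exp_log ht, ← Real.exp_add]
          congr 1
          rw [hxdef]
          field_simp
          ring
        have hy0 : 0 < (x - (k : ℝ)) / w := div_pos (by linarith) hw0
        have hs_lt : Real.exp ((k : ℝ) / w) < t := by
          rw [hs_eq]
          nlinarith [Real.exp_lt_one_iff.mpr (neg_lt_zero.mpr hy0), ht]
        have hdist : dist (Real.exp ((k : ℝ) / w)) t < δ₂ := by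
          rw [Real.dist_eq, abs_of_neg (by linarith)]
          have hone : 1 - (x - (k : ℝ)) / w ≤ Real.exp (-((x - (k : ℝ)) / w)) := by
            have := Real.add_one_le_exp (-((x - (k : ℝ)) / w))
            linarith
          have hxkN : x - (k : ℝ) < N := by
            rw [abs_of_neg (by linarith)] at hkN
            linarith
          have hTN : t * N < w * δ₂ := (div_lt_iff₀ hδ₂pos).mp hwδ₂
          have e1 : t - t * Real.exp (-((x - (k : ℝ)) / w)) ≤ t * ((x - (k : ℝ)) / w) := by
            nlinarith [hone, ht]
          have e2 : t * ((x - (k : ℝ)) / w) < δ₂ := by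
            rw [mul_div_assoc'] 
            rw [div_lt_iff₀ hw0]
            nlinarith [hTN, hxkN, ht]
          rw [hs_eq]
          linarith
        have := hδ₂ (Set.mem_Iio.mpr hs_lt) hdist
        rw [Real.dist_eq] at this
        linarith
    have hW0 : 0 ≤ |(k : ℝ) - x| ^ ν := Real.rpow_nonneg (abs_nonneg _) ν
    by_cases hka : k = a
    · have hcK : c ≤ K := by rw [hc, hka]; exact hχa
      have hEε : E ≤ ε := hnear (by
        rw [hka, abs_of_nonpos (by linarith [hfr.1])]
        linarith [hfr.1, hN1])
      have hbd : c * E ≤ ε * K := by nlinarith [mul_le_mul hcK hEε hE0 hK0]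
      have h2nn : (0 : ℝ) ≤ (if k = a + 1 then ε * K else 0) := by
        split_ifs
        · positivity
        · exact le_rfl
      have h3nn : (0 : ℝ) ≤ (ε + (B + D) / N ^ ν) * (c * |(k : ℝ) - x| ^ ν) :=
        mul_nonneg hcoef0 (mul_nonneg hc0 hW0)
      rw [hM k]
      simp only [if_pos hka]
      linarith [hbd, h2nn, h3nn]
    · by_cases hka1 : k = a + 1
      · have hcK : c ≤ K := by
          rw [hc, hka1]
          exact hχa1
        have hEε : E ≤ ε := hnear (by
          rw [hka1, abs_of_nonneg (by push_cast; linarith [hfr.2])]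
          push_cast
          linarith [hfr.2, hN1])
        have hbd : c * E ≤ ε * K := by nlinarith [mul_le_mul hcK hEε hE0 hK0]
        have h3nn : (0 : ℝ) ≤ (ε + (B + D) / N ^ ν) * (c * |(k : ℝ) - x| ^ ν) :=
          mul_nonneg hcoef0 (mul_nonneg hc0 hW0)
        rw [hM k]
        simp only [if_pos hka1, if_neg hka]
        linarith [hbd, h3nn]
      · have hk_far : 1 ≤ |(k : ℝ) - x| := by
          have hcases : k ≤ a - 1 ∨ a + 2 ≤ k := by omega
          rcases hcases with h | h
          · have hkr : (k : ℝ) ≤ (a : ℝ) - 1 := by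
              have : ((k : ℤ) : ℝ) ≤ ((a - 1 : ℤ) : ℝ) := by exact_mod_cast h
              push_cast at this
              linarith
            rw [abs_of_nonpos (by linarith [hfr.1])]
            linarith [hfr.1]
          · have hkr : (a : ℝ) + 2 ≤ (k : ℝ) := by
              have : ((a + 2 : ℤ) : ℝ) ≤ ((k : ℤ) : ℝ) := by exact_mod_cast h
              push_cast at this
              linarith
            rw [abs_of_nonneg (by linarith [hfr.2])]
            linarith [hfr.2]
        have hW1 : 1 ≤ |(k : ℝ) - x| ^ ν := Real.one_le_rpow hk_far hν.le
        rw [hM k]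
        simp only [if_neg hka, if_neg hka1, zero_add]
        by_cases hkN : |(k : ℝ) - x| < N
        · have t1 : c * E ≤ c * ε := mul_le_mul_of_nonneg_left (hnear hkN) hc0
          have t3 : 0 ≤ ((B + D) / N ^ ν) * (c * |(k : ℝ) - x| ^ ν) :=
            mul_nonneg (div_nonneg (by linarith) hNν0.le) (mul_nonneg hc0 hW0)
          nlinarith [t1, t3, mul_le_mul_of_nonneg_right hW1 (mul_nonneg hεpos.le hc0)]
        · have hWN : N ^ ν ≤ |(k : ℝ) - x| ^ ν :=
            Real.rpow_le_rpow (by linarith) (not_lt.mp hkN) hν.le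
          have t1 : c * E ≤ c * (B + D) := mul_le_mul_of_nonneg_left hEall hc0
          have t2 : c * (B + D) = ((B + D) / N ^ ν) * (c * N ^ ν) := by
            field_simp
          have t3 : ((B + D) / N ^ ν) * (c * N ^ ν) ≤ ((B + D) / N ^ ν) * (c * |(k : ℝ) - x| ^ ν) :=
            mul_le_mul_of_nonneg_left (mul_le_mul_of_nonneg_left hWN hc0)
              (div_nonneg (by linarith) hNν0.le)
          have t4 : 0 ≤ ε * (c * |(k : ℝ) - x| ^ ν) := mul_nonneg hεpos.le (mul_nonneg hc0 hW0)
          nlinarith [t1, t2, t3, t4]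
  -- conclusion
  have hdiffsummable : Summable (fun k : ℤ => χ (Real.exp (x - (k : ℝ))) * f (Real.exp ((k : ℝ) / w))
      - χ (Real.exp (x - (k : ℝ))) * (if x < (k : ℝ) then fp else fm)) := hSf.sub hmain.summable
  calc dist (expSamp χ f w t) (α * fp + (1 - α) * fm)
      = |∑' k : ℤ, (χ (Real.exp (x - (k : ℝ))) * f (Real.exp ((k : ℝ) / w))
          - χ (Real.exp (x - (k : ℝ))) * (if x < (k : ℝ) then fp else fm))| := by
        rw [Real.dist_eq, hES, ← hmain.tsum_eq, ← Summable.tsum_sub hSf hmain.summable]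
    _ ≤ ∑' k : ℤ, |χ (Real.exp (x - (k : ℝ))) * f (Real.exp ((k : ℝ) / w))
          - χ (Real.exp (x - (k : ℝ))) * (if x < (k : ℝ) then fp else fm)| := by
        simpa [Real.norm_eq_abs] using norm_tsum_le_tsum_norm
          (f := fun k : ℤ => χ (Real.exp (x - (k : ℝ))) * f (Real.exp ((k : ℝ) / w))
            - χ (Real.exp (x - (k : ℝ))) * (if x < (k : ℝ) then fp else fm))
          (by simpa [Real.norm_eq_abs] using hdiffsummable.abs)
    _ ≤ ∑' k : ℤ, M k := Summable.tsum_le_tsum hpt hdiffsummable.abs hMsummable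
    _ ≤ ε * K + ε * K + (ε + (B + D) / N ^ ν) * C := hMtsum
    _ ≤ ε * (2 * K + 2 * C) := by nlinarith [hNb, hC0, hεpos]
    _ < ε' := hεfinal

end Main

set_option maxHeartbeats 1000000 in
lemma forward (h1 : ∀ u : ℝ, 0 < u → Summable fun k : ℤ => |χ (Real.exp (-(k : ℝ)) * u)|)
    (h2 : ∀ u : ℝ, 0 < u → HasSum (fun k : ℤ => χ (Real.exp (-(k : ℝ)) * u)) 1)
    (hf : ∀ x : ℝ, 0 < x → |f x| ≤ B) (ht : 0 < t)
    (hfp : Filter.Tendsto f (nhdsWithin t (Set.Ioi t)) (nhds fp))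
    (hfm : Filter.Tendsto f (nhdsWithin t (Set.Iio t)) (nhds fm))
    (hjump : fp ≠ fm) {α : ℝ} (hL : Real.log t ≠ 0)
    (HT : Filter.Tendsto (fun w => expSamp χ f w t)
        (Filter.atTop ⊓ Filter.principal {w : ℝ | ∀ m : ℤ, w * Real.log t ≠ (m : ℝ)})
        (nhds (α * fp + (1 - α) * fm))) :
    ∀ u ∈ Set.Ioo (1 : ℝ) (Real.exp 1), psiMinus χ u = α := by
  intro u₀ hu₀
  have hu0 : (0 : ℝ) < u₀ := lt_trans one_pos hu₀.1
  have hl0 : 0 < Real.log u₀ := Real.log_pos hu₀.1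
  have hl1 : Real.log u₀ < 1 := by
    have := Real.log_lt_log hu0 hu₀.2
    simpa using this
  have hB0 : 0 ≤ B := le_trans (abs_nonneg _) (hf t ht)
  obtain ⟨m, hm⟩ : ∃ m : ℕ → ℤ, m = fun n : ℕ => if 0 < Real.log t then (n : ℤ) else -(n : ℤ) :=
    ⟨_, rfl⟩
  obtain ⟨w, hwdef⟩ : ∃ w : ℕ → ℝ, w = fun n => (((m n : ℤ) : ℝ) + Real.log u₀) / Real.log t :=
    ⟨_, rfl⟩
  have hwc : ∀ n, w n * Real.log t = ((m n : ℤ) : ℝ) + Real.log u₀ := fun n => by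
    rw [hwdef]; exact div_mul_cancel₀ _ hL
  have habs : 0 < |Real.log t| := abs_pos.mpr hL
  have hwn : ∀ n : ℕ, ((n : ℝ) - 1) / |Real.log t| ≤ w n := by
    intro n
    by_cases hLpos : 0 < Real.log t
    · have hmn : ((m n : ℤ) : ℝ) = (n : ℝ) := by rw [hm]; simp [hLpos]
      rw [hwdef, abs_of_pos hLpos]
      simp only [hmn]
      gcongr
      linarith
    · have hLneg : Real.log t < 0 := lt_of_le_of_ne (not_lt.mp hLpos) hL
      have hmn : ((m n : ℤ) : ℝ) = -(n : ℝ) := by rw [hm]; simp [hLpos]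
      rw [hwdef, abs_of_neg hLneg]
      simp only [hmn]
      have hrw : (-(n : ℝ) + Real.log u₀) / Real.log t
          = ((n : ℝ) - Real.log u₀) / (-Real.log t) := by
        rw [div_neg, ← neg_div]
        ring_nf
      rw [hrw]
      gcongr
      linarith
  have htend : Filter.Tendsto w Filter.atTop Filter.atTop := by
    apply tendsto_atTop_mono hwn
    apply Filter.Tendsto.atTop_div_const habs
    exact tendsto_atTop_add_const_right _ (-1) tendsto_natCast_atTop_atTop
  have hmem : ∀ n : ℕ, ∀ m' : ℤ, w n * Real.log t ≠ (m' : ℝ) := by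
    intro n m' h
    rw [hwc n] at h
    have : ((m' - m n : ℤ) : ℝ) = Real.log u₀ := by push_cast; linarith
    exact intcast_ne_of_Ioo01 hl0 hl1 (m' - m n) this
  have hwne : ∀ n : ℕ, w n ≠ 0 := by
    intro n h
    apply hmem n 0
    rw [h, zero_mul]
    simp
  have htendF : Filter.Tendsto w Filter.atTop
      (Filter.atTop ⊓ Filter.principal {w : ℝ | ∀ m : ℤ, w * Real.log t ≠ (m : ℝ)}) :=
    Filter.tendsto_inf.mpr ⟨htend, Filter.tendsto_principal.mpr
      (Filter.Eventually.of_forall fun n => hmem n)⟩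
  have hcomp : Filter.Tendsto (fun n => expSamp χ f (w n) t) Filter.atTop
      (nhds (α * fp + (1 - α) * fm)) := HT.comp htendF
  -- rewrite the sampling series
  have hinner : ∀ n : ℕ, ∀ j : ℤ,
      (((m n + j : ℤ) : ℝ)) / w n = Real.log t + ((j : ℝ) - Real.log u₀) / w n := by
    intro n j
    have h0 := hwc n
    apply mul_right_cancel₀ (hwne n)
    rw [div_mul_cancel₀ _ (hwne n), add_mul, div_mul_cancel₀ _ (hwne n)]
    push_cast
    push_cast at h0
    linarith [h0]
  have hrw : ∀ n : ℕ, expSamp χ f (w n) t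
      = ∑' j : ℤ, χ (u₀ * Real.exp (-(j : ℝ)))
          * f (Real.exp (((m n + j : ℤ) : ℝ) / w n)) := by
    intro n
    have step1 : expSamp χ f (w n) t
        = ∑' k : ℤ, χ (Real.exp (w n * Real.log t - (k : ℝ))) * f (Real.exp ((k : ℝ) / w n)) := by
      apply tsum_congr
      intro k
      rw [Real.rpow_def_of_pos ht, exp_arg, mul_comm (Real.log t) (w n)]
    rw [step1, ← (Equiv.addLeft (m n)).tsum_eq
      (fun k : ℤ => χ (Real.exp (w n * Real.log t - (k : ℝ))) * f (Real.exp ((k : ℝ) / w n)))]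
    apply tsum_congr
    intro j
    simp only [Equiv.coe_addLeft]
    have harg : Real.exp (w n * Real.log t - ((m n + j : ℤ) : ℝ)) = u₀ * Real.exp (-(j : ℝ)) := by
      rw [show w n * Real.log t - ((m n + j : ℤ) : ℝ) = Real.log u₀ - (j : ℝ) from by
        rw [hwc n]; push_cast; ring]
      rw [Real.exp_sub, Real.exp_log hu0, Real.exp_neg, div_eq_mul_inv]
    rw [harg]
  -- dominated convergence
  have hdom : Filter.Tendsto (fun n => ∑' j : ℤ, χ (u₀ * Real.exp (-(j : ℝ)))
        * f (Real.exp (((m n + j : ℤ) : ℝ) / w n))) Filter.atTop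
      (nhds (∑' j : ℤ, χ (u₀ * Real.exp (-(j : ℝ)))
        * (if Real.log u₀ < (j : ℝ) then fp else fm))) := by
    apply tendsto_tsum_of_dominated_convergence
      (bound := fun j : ℤ => |χ (u₀ * Real.exp (-(j : ℝ)))| * B)
    · exact Summable.mul_right B (by simpa only [mul_comm] using h1 u₀ hu0)
    · intro j
      apply Filter.Tendsto.const_mul
      have hseq : ∀ n : ℕ, Real.exp (((m n + j : ℤ) : ℝ) / w n)
          = t * Real.exp (((j : ℝ) - Real.log u₀) / w n) := by
        intro n
        rw [hinner n j, Real.exp_add, Real.exp_log ht]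
      have hy : Filter.Tendsto (fun n => ((j : ℝ) - Real.log u₀) / w n) Filter.atTop (nhds 0) :=
        tendsto_const_nhds.div_atTop htend
      have hs_tend : Filter.Tendsto (fun n => t * Real.exp (((j : ℝ) - Real.log u₀) / w n))
          Filter.atTop (nhds t) := by
        have := ((Real.continuous_exp.tendsto 0).comp hy).const_mul t
        simpa using this
      by_cases hj : Real.log u₀ < (j : ℝ)
      · rw [if_pos hj]
        apply hfp.comp
        rw [tendsto_nhdsWithin_iff]
        constructor
        · exact Filter.Tendsto.congr (fun n => (hseq n).symm) hs_tend
        · filter_upwards [htend.eventually_gt_atTop 0] with n hn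
          rw [hseq n]
          have : 1 < Real.exp (((j : ℝ) - Real.log u₀) / w n) :=
            Real.one_lt_exp_iff.mpr (div_pos (by linarith) hn)
          have := mul_lt_mul_of_pos_left this ht
          simpa using this
      · have hj' : (j : ℝ) < Real.log u₀ := by
          rcases lt_or_eq_of_le (not_lt.mp hj) with h | h
          · exact h
          · exact absurd h (intcast_ne_of_Ioo01 hl0 hl1 j)
        rw [if_neg hj]
        apply hfm.comp
        rw [tendsto_nhdsWithin_iff]
        constructor
        · exact Filter.Tendsto.congr (fun n => (hseq n).symm) hs_tend
        · filter_upwards [htend.eventually_gt_atTop 0] with n hn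
          rw [hseq n]
          have : Real.exp (((j : ℝ) - Real.log u₀) / w n) < 1 :=
            Real.exp_lt_one_iff.mpr (div_neg_of_neg_of_pos (by linarith) hn)
          have := mul_lt_mul_of_pos_left this ht
          simpa using this
    · apply Filter.Eventually.of_forall
      intro n j
      rw [Real.norm_eq_abs, abs_mul]
      exact mul_le_mul_of_nonneg_left (hf _ (Real.exp_pos _)) (abs_nonneg _)
  -- identify the limit
  have hcomp' : Filter.Tendsto (fun n => ∑' j : ℤ, χ (u₀ * Real.exp (-(j : ℝ)))
      * f (Real.exp (((m n + j : ℤ) : ℝ) / w n))) Filter.atTop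
      (nhds (α * fp + (1 - α) * fm)) := by
    apply hcomp.congr
    intro n
    exact hrw n
  have huniq : (∑' j : ℤ, χ (u₀ * Real.exp (-(j : ℝ)))
      * (if Real.log u₀ < (j : ℝ) then fp else fm)) = α * fp + (1 - α) * fm :=
    tendsto_nhds_unique hdom hcomp'
  -- compute the tsum
  have hsplit : (∑' j : ℤ, χ (u₀ * Real.exp (-(j : ℝ)))
      * (if Real.log u₀ < (j : ℝ) then fp else fm))
      = psiMinus χ u₀ * fp + psiPlus χ u₀ * fm := by
    have heq : (fun j : ℤ => χ (u₀ * Real.exp (-(j : ℝ)))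
        * (if Real.log u₀ < (j : ℝ) then fp else fm))
        = fun j : ℤ => (if Real.log u₀ < (j : ℝ) then χ (u₀ * Real.exp (-(j : ℝ))) else 0) * fp
          + (if (j : ℝ) < Real.log u₀ then χ (u₀ * Real.exp (-(j : ℝ))) else 0) * fm := by
      funext j
      rcases lt_trichotomy (Real.log u₀) ((j : ℝ)) with h | h | h
      · rw [if_pos h, if_pos h, if_neg (by linarith)]; ring
      · exact absurd h.symm (intcast_ne_of_Ioo01 hl0 hl1 j)
      · rw [if_neg (by linarith), if_neg (by linarith), if_pos h]; ring
    rw [heq, Summable.tsum_add ((summable_ite_chi h1 hu0 _).mul_right fp)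
      ((summable_ite_chi h1 hu0 _).mul_right fm), tsum_mul_right, tsum_mul_right]
    rfl
  have hpsum := psi_add h1 h2 hu₀.1 hu₀.2
  rw [hsplit] at huniq
  have hfactor : (fp - fm) * (psiMinus χ u₀ - α) = 0 := by linear_combination huniq - fm * hpsum
  rcases mul_eq_zero.mp hfactor with h | h
  · exact absurd (by linarith : fp = fm) hjump
  · linarith

/-- Behaviour at a jump discontinuity along w with w·log t ∉ ℤ. -/
theorem stmt4 (χ f : ℝ → ℝ) (hχ : IsKernel χ)
    (B : ℝ) (hf : ∀ x : ℝ, 0 < x → |f x| ≤ B)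
    (t : ℝ) (ht : 0 < t) (fp fm : ℝ)
    (hfp : Filter.Tendsto f (nhdsWithin t (Set.Ioi t)) (nhds fp))
    (hfm : Filter.Tendsto f (nhdsWithin t (Set.Iio t)) (nhds fm))
    (hjump : fp ≠ fm) (α : ℝ)
    (hNe : (Filter.atTop ⊓ Filter.principal {w : ℝ | ∀ m : ℤ, w * Real.log t ≠ (m : ℝ)}).NeBot) :
    (Filter.Tendsto (fun w => expSamp χ f w t)
        (Filter.atTop ⊓ Filter.principal {w : ℝ | ∀ m : ℤ, w * Real.log t ≠ (m : ℝ)})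
        (nhds (α * fp + (1 - α) * fm))
      ↔ ∀ u ∈ Set.Ioo (1 : ℝ) (Real.exp 1), psiMinus χ u = α) ∧
    ((∀ u ∈ Set.Ioo (1 : ℝ) (Real.exp 1), psiMinus χ u = α) ↔
      ∀ u ∈ Set.Ioo (1 : ℝ) (Real.exp 1), psiPlus χ u = 1 - α) := by
  obtain ⟨h1, h2, ν, hν, C, hmom⟩ := hχ
  have hL : Real.log t ≠ 0 := by
    intro h
    have hempty : {w : ℝ | ∀ m : ℤ, w * Real.log t ≠ (m : ℝ)} = (∅ : Set ℝ) := by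
      ext w
      simp only [Set.mem_setOf_eq, Set.mem_empty_iff_false, iff_false, not_forall]
      push_neg
      exact ⟨0, by simp [h]⟩
    rw [hempty, Filter.principal_empty, inf_bot_eq] at hNe
    exact hNe.ne rfl
  constructor
  · constructor
    · intro HT
      exact forward h1 h2 hf ht hfp hfm hjump hL HT
    · intro Hm
      exact backward h1 h2 hν hmom hf ht hfp hfm Hm
  · constructor
    · intro Hm u hu
      have h3 := psi_add h1 h2 hu.1 hu.2
      have h4 := Hm u hu
      linarith
    · intro Hp u hu
      have h3 := psi_add h1 h2 hu.1 hu.2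
      have h4 := Hp u hu
      linarith
end

section
/- Let χ be a continuous kernel with χ(1) = 0, for which the Mellin–Poisson summation formula holds for χ₀ := χ·1_{(0,1)}. Then ψ_χ⁻(u) = α for all u ∈ [1, e) if and only if ∫₀¹ χ(u) u^{2kπi} du/u = 0 for all integers k ≠ 0 and = α for k = 0. -/
open Real Filter Set MeasureTheory

private noncomputable def cInt (χ : ℝ → ℝ) (k : ℤ) : ℂ :=
  ∫ v in Set.Ioo (0 : ℝ) 1,
    (v : ℂ) ^ (2 * (Real.pi : ℂ) * (k : ℂ) * Complex.I - 1) * (χ v : ℂ)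

private lemma stmt7_bridge (χ : ℝ → ℝ) (k : ℤ) :
    (∫ v in Set.Ioi (0 : ℝ),
        (v : ℂ) ^ (2 * (Real.pi : ℂ) * (k : ℂ) * Complex.I - 1) *
          (if v < 1 then (χ v : ℂ) else 0)) = cInt χ k := by
  have h : ∀ v : ℝ,
      (v : ℂ) ^ (2 * (Real.pi : ℂ) * (k : ℂ) * Complex.I - 1) *
          (if v < 1 then (χ v : ℂ) else 0)
        = (Set.Iio (1 : ℝ)).indicator
            (fun v : ℝ =>
              (v : ℂ) ^ (2 * (Real.pi : ℂ) * (k : ℂ) * Complex.I - 1) * (χ v : ℂ)) v := by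
    intro v
    by_cases hv : v < 1 <;> simp [Set.indicator_apply, Set.mem_Iio, hv]
  simp_rw [h]
  rw [MeasureTheory.setIntegral_indicator measurableSet_Iio, Set.Ioi_inter_Iio]
  rfl

private lemma psiMinus_shift (χ : ℝ → ℝ) (n : ℤ) (u : ℝ) (hu : 0 < u) :
    psiMinus χ (Real.exp (n : ℝ) * u) = psiMinus χ u := by
  unfold psiMinus
  conv_lhs => rw [← (Equiv.addRight n).tsum_eq]
  apply tsum_congr
  intro j
  simp only [Equiv.coe_addRight]
  have hlog : Real.log (Real.exp (n : ℝ) * u) = (n : ℝ) + Real.log u := by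
    rw [Real.log_mul (Real.exp_ne_zero _) (ne_of_gt hu), Real.log_exp]
  have hcond : (Real.log (Real.exp (n : ℝ) * u) < ((j + n : ℤ) : ℝ)) ↔
      (Real.log u < (j : ℝ)) := by
    rw [hlog]; push_cast; constructor <;> intro <;> linarith
  have hval : Real.exp (n : ℝ) * u * Real.exp (-((j + n : ℤ) : ℝ)) =
      u * Real.exp (-(j : ℝ)) := by
    rw [mul_comm (Real.exp (n : ℝ)) u, mul_assoc, ← Real.exp_add]
    congr 1
    push_cast
    ring
  rw [hval]
  by_cases hc : Real.log u < (j : ℝ)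
  · rw [if_pos hc]; exact if_pos (hcond.mpr hc)
  · rw [if_neg hc]; exact if_neg (fun h => hc (hcond.mp h))

private lemma stmt7_orth (m : ℤ) :
    (∫ t in Set.Ioc (0 : ℝ) 1,
        Complex.exp ((t : ℂ) * (2 * (Real.pi : ℂ) * (m : ℂ) * Complex.I)))
      = if m = 0 then 1 else 0 := by
  by_cases hm : m = 0
  · subst hm
    simp [Real.volume_Ioc]
  · rw [if_neg hm, ← intervalIntegral.integral_of_le zero_le_one]
    have hc : (2 * (Real.pi : ℂ) * (m : ℂ) * Complex.I) ≠ 0 :=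
      mul_ne_zero (mul_ne_zero (mul_ne_zero two_ne_zero
        (Complex.ofReal_ne_zero.mpr Real.pi_ne_zero)) (Int.cast_ne_zero.mpr hm))
        Complex.I_ne_zero
    have heq : ∀ x : ℝ, (x : ℂ) * (2 * (Real.pi : ℂ) * (m : ℂ) * Complex.I)
        = (2 * (Real.pi : ℂ) * (m : ℂ) * Complex.I) * (x : ℝ) := fun x => mul_comm _ _
    simp_rw [heq]
    rw [integral_exp_mul_complex hc]
    rw [show ((2 : ℂ) * (Real.pi : ℂ) * (m : ℂ) * Complex.I)
        = (m : ℂ) * (2 * (Real.pi : ℂ) * Complex.I) by ring]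
    rw [Complex.ofReal_one, Complex.ofReal_zero, mul_one, mul_zero, Complex.exp_zero]
    rw [Complex.exp_int_mul_two_pi_mul_I]
    simp

/-- Mellin condition for the constancy of ψ⁻, assuming Mellin–Poisson summation for
χ₀ = χ·1_{(0,1)}. -/
theorem stmt7 (χ : ℝ → ℝ) (hχ : IsKernel χ) (hcont : ContinuousOn χ (Set.Ioi 0))
    (hχ1 : χ 1 = 0) (α : ℝ)
    (hMP : ∀ u : ℝ, 0 < u →
      HasSum (fun k : ℤ =>
        (∫ v in Set.Ioi (0 : ℝ),
            (v : ℂ) ^ (2 * (Real.pi : ℂ) * (k : ℂ) * Complex.I - 1) *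
              (if v < 1 then (χ v : ℂ) else 0)) *
          (u : ℂ) ^ (-(2 * (Real.pi : ℂ) * (k : ℂ) * Complex.I)))
        ((psiMinus χ u : ℂ))) :
    (∀ u ∈ Set.Ico (1 : ℝ) (Real.exp 1), psiMinus χ u = α) ↔
      ∀ k : ℤ,
        (∫ v in Set.Ioo (0 : ℝ) 1,
            (v : ℂ) ^ (2 * (Real.pi : ℂ) * (k : ℂ) * Complex.I - 1) * (χ v : ℂ))
          = if k = 0 then (α : ℂ) else 0 := by
  have hMP' : ∀ u : ℝ, 0 < u →
      HasSum (fun k : ℤ =>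
        cInt χ k * (u : ℂ) ^ (-(2 * (Real.pi : ℂ) * (k : ℂ) * Complex.I)))
        ((psiMinus χ u : ℂ)) := by
    intro u hu
    have h0 := hMP u hu
    simpa only [stmt7_bridge] using h0
  constructor
  · intro h n
    show cInt χ n = if n = 0 then (α : ℂ) else 0
    -- Step A: psiMinus is α everywhere on (0, ∞)
    have hAll : ∀ u : ℝ, 0 < u → psiMinus χ u = α := by
      intro u hu
      have hfl : ((⌊Real.log u⌋ : ℤ) : ℝ) ≤ Real.log u := Int.floor_le _
      have hfl2 : Real.log u < (⌊Real.log u⌋ : ℝ) + 1 := Int.lt_floor_add_one _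
      have hu₀ : Real.exp (Real.log u - (⌊Real.log u⌋ : ℝ)) ∈
          Set.Ico (1 : ℝ) (Real.exp 1) := by
        constructor
        · rw [show (1 : ℝ) = Real.exp 0 from (Real.exp_zero).symm]
          exact Real.exp_le_exp.mpr (by linarith)
        · exact Real.exp_lt_exp.mpr (by linarith)
      have hdecomp : Real.exp ((⌊Real.log u⌋ : ℤ) : ℝ) *
          Real.exp (Real.log u - (⌊Real.log u⌋ : ℝ)) = u := by
        rw [← Real.exp_add,
          show ((⌊Real.log u⌋ : ℤ) : ℝ) + (Real.log u - (⌊Real.log u⌋ : ℝ)) = Real.log u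
            by ring,
          Real.exp_log hu]
      rw [← hdecomp, psiMinus_shift χ _ _ (Real.exp_pos _)]
      exact h _ hu₀
    -- Step B: the Fourier series has constant sum α at every real t
    have hS : ∀ t : ℝ, HasSum (fun k : ℤ =>
        cInt χ k * Complex.exp ((t : ℂ) * (-(2 * (Real.pi : ℂ) * (k : ℂ) * Complex.I))))
        (α : ℂ) := by
      intro t
      have hupos : (0 : ℝ) < Real.exp t := Real.exp_pos t
      have h0 := hMP' (Real.exp t) hupos
      rw [hAll _ hupos] at h0
      have hrw : ∀ k : ℤ, ((Real.exp t : ℝ) : ℂ) ^ (-(2 * (Real.pi : ℂ) * (k : ℂ) * Complex.I))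
          = Complex.exp ((t : ℂ) * (-(2 * (Real.pi : ℂ) * (k : ℂ) * Complex.I))) := by
        intro k
        rw [Complex.cpow_def_of_ne_zero
          (Complex.ofReal_ne_zero.mpr hupos.ne')]
        congr 1
        rw [← Complex.ofReal_log hupos.le, Real.log_exp]
      simpa only [hrw] using h0
    -- Step C: absolute summability of the coefficients
    have hsum_c : HasSum (cInt χ) (α : ℂ) := by
      have h0 := hS 0
      simpa using h0
    have hnorm : Summable fun k : ℤ => ‖cInt χ k‖ :=
      summable_norm_iff.mpr hsum_c.summable
    -- Step D: Fourier inversion via term-by-term integration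
    have hGnorm : ∀ (k : ℤ) (t : ℝ),
        ‖cInt χ k * Complex.exp ((t : ℂ) *
          (2 * (Real.pi : ℂ) * ((n : ℂ) - (k : ℂ)) * Complex.I))‖ = ‖cInt χ k‖ := by
      intro k t
      have hrw : (t : ℂ) * (2 * (Real.pi : ℂ) * ((n : ℂ) - (k : ℂ)) * Complex.I)
          = ((t * (2 * Real.pi * ((n : ℝ) - (k : ℝ))) : ℝ) : ℂ) * Complex.I := by
        push_cast; ring
      have h1 : ‖Complex.exp ((t : ℂ) *
          (2 * (Real.pi : ℂ) * ((n : ℂ) - (k : ℂ)) * Complex.I))‖ = 1 := by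
        rw [hrw, Complex.norm_exp_ofReal_mul_I]
      rw [norm_mul, h1, mul_one]
    have hGint : ∀ k : ℤ, MeasureTheory.IntegrableOn
        (fun t : ℝ => cInt χ k * Complex.exp ((t : ℂ) *
          (2 * (Real.pi : ℂ) * ((n : ℂ) - (k : ℂ)) * Complex.I)))
        (Set.Ioc (0 : ℝ) 1) := by
      intro k
      apply Continuous.integrableOn_Ioc
      exact continuous_const.mul (Complex.continuous_exp.comp
        (Complex.continuous_ofReal.mul continuous_const))
    have hGnormint : ∀ k : ℤ,
        (∫ t in Set.Ioc (0 : ℝ) 1, ‖cInt χ k * Complex.exp ((t : ℂ) *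
          (2 * (Real.pi : ℂ) * ((n : ℂ) - (k : ℂ)) * Complex.I))‖) = ‖cInt χ k‖ := by
      intro k
      simp_rw [hGnorm k]
      simp [Real.volume_Ioc]
    have hinter := MeasureTheory.integral_tsum_of_summable_integral_norm
      (μ := MeasureTheory.volume.restrict (Set.Ioc (0 : ℝ) 1))
      (F := fun (k : ℤ) (t : ℝ) => cInt χ k * Complex.exp ((t : ℂ) *
        (2 * (Real.pi : ℂ) * ((n : ℂ) - (k : ℂ)) * Complex.I)))
      (fun k => hGint k)
      ((summable_congr hGnormint).mpr hnorm)
    have htsum : ∀ t : ℝ,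
        (∑' k : ℤ, cInt χ k * Complex.exp ((t : ℂ) *
          (2 * (Real.pi : ℂ) * ((n : ℂ) - (k : ℂ)) * Complex.I)))
        = (α : ℂ) * Complex.exp ((t : ℂ) * (2 * (Real.pi : ℂ) * (n : ℂ) * Complex.I)) := by
      intro t
      have h1 := (hS t).mul_right
        (Complex.exp ((t : ℂ) * (2 * (Real.pi : ℂ) * (n : ℂ) * Complex.I)))
      have h2 : (fun k : ℤ =>
          cInt χ k * Complex.exp ((t : ℂ) * (-(2 * (Real.pi : ℂ) * (k : ℂ) * Complex.I))) *
            Complex.exp ((t : ℂ) * (2 * (Real.pi : ℂ) * (n : ℂ) * Complex.I)))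
          = fun k : ℤ => cInt χ k * Complex.exp ((t : ℂ) *
            (2 * (Real.pi : ℂ) * ((n : ℂ) - (k : ℂ)) * Complex.I)) := by
        funext k
        rw [mul_assoc, ← Complex.exp_add]
        congr 2
        ring
      rw [h2] at h1
      exact h1.tsum_eq
    have hint_k : ∀ k : ℤ,
        (∫ t in Set.Ioc (0 : ℝ) 1, cInt χ k * Complex.exp ((t : ℂ) *
          (2 * (Real.pi : ℂ) * ((n : ℂ) - (k : ℂ)) * Complex.I)))
        = if k = n then cInt χ n else 0 := by
      intro k
      rw [MeasureTheory.integral_const_mul]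
      rw [show ((n : ℂ) - (k : ℂ)) = ((n - k : ℤ) : ℂ) by push_cast; ring]
      rw [stmt7_orth (n - k)]
      by_cases hk : k = n
      · subst hk; simp
      · rw [if_neg (by omega : ¬ (n - k = 0)), if_neg hk, mul_zero]
    have hRHS : (∫ t in Set.Ioc (0 : ℝ) 1, (α : ℂ) * Complex.exp ((t : ℂ) *
        (2 * (Real.pi : ℂ) * (n : ℂ) * Complex.I)))
        = if n = 0 then (α : ℂ) else 0 := by
      rw [MeasureTheory.integral_const_mul, stmt7_orth n]
      by_cases hn : n = 0 <;> simp [hn]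
    calc cInt χ n = ∑' k : ℤ, (if k = n then cInt χ n else 0) :=
          (tsum_ite_eq n (fun _ => cInt χ n)).symm
      _ = ∑' k : ℤ, ∫ t in Set.Ioc (0 : ℝ) 1, cInt χ k * Complex.exp ((t : ℂ) *
            (2 * (Real.pi : ℂ) * ((n : ℂ) - (k : ℂ)) * Complex.I)) :=
          tsum_congr fun k => (hint_k k).symm
      _ = ∫ t in Set.Ioc (0 : ℝ) 1, ∑' k : ℤ, cInt χ k * Complex.exp ((t : ℂ) *
            (2 * (Real.pi : ℂ) * ((n : ℂ) - (k : ℂ)) * Complex.I)) := hinter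
      _ = ∫ t in Set.Ioc (0 : ℝ) 1, (α : ℂ) * Complex.exp ((t : ℂ) *
            (2 * (Real.pi : ℂ) * (n : ℂ) * Complex.I)) :=
          MeasureTheory.integral_congr_ae (Filter.Eventually.of_forall fun t => htsum t)
      _ = if n = 0 then (α : ℂ) else 0 := hRHS
  · intro h u hu
    have hu0 : (0 : ℝ) < u := lt_of_lt_of_le one_pos hu.1
    have h1 : (fun k : ℤ =>
        cInt χ k * (u : ℂ) ^ (-(2 * (Real.pi : ℂ) * (k : ℂ) * Complex.I)))
        = fun k : ℤ => if k = 0 then (α : ℂ) else 0 := by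
      funext k
      have hck : cInt χ k = if k = 0 then (α : ℂ) else 0 := h k
      rw [hck]
      by_cases hk : k = 0
      · subst hk; simp
      · simp [hk]
    have h2 : HasSum (fun k : ℤ => if k = 0 then (α : ℂ) else 0) (α : ℂ) :=
      hasSum_ite_eq 0 (α : ℂ)
    have h3 := hMP' u hu0
    rw [h1] at h3
    have h4 : ((psiMinus χ u : ℝ) : ℂ) = (α : ℂ) := h3.unique h2
    exact_mod_cast h4
end

section
/- Let f: ℝ⁺ → ℝ be bounded with a removable discontinuity at t ∈ ℝ⁺, i.e. f(t+0) = f(t-0) = ℓ (possibly f(t) ≠ ℓ), and let χ be a kernel. Then: (i) lim_{w→∞, w·log t ∈ ℤ} (S_w^χ f)(t) = ℓ + χ(1)[f(t) - ℓ]; (ii) lim_{w→∞, w·log t ∉ ℤ} (S_w^χ f)(t) = ℓ; (iii) if χ(1) = 0 then lim_{w→∞} (S_w^χ f)(t) = ℓ. -/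
open Real Filter Set MeasureTheory

set_option maxHeartbeats 1000000

lemma abs_tsum_le' (g : ℤ → ℝ) (hn : Summable fun k : ℤ => |g k|) :
    |∑' k : ℤ, g k| ≤ ∑' k : ℤ, |g k| := by
  have h2 : Summable fun k : ℤ => ‖g k‖ := hn
  simpa [Real.norm_eq_abs] using norm_tsum_le_tsum_norm (f := g) h2

lemma kernel_abs_bound {χ : ℝ → ℝ}
    (hsum : ∀ u : ℝ, 0 < u → Summable fun k : ℤ => |χ (Real.exp (-(k:ℝ)) * u)|)
    (hpart : ∀ u : ℝ, 0 < u → HasSum (fun k : ℤ => χ (Real.exp (-(k:ℝ)) * u)) 1)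
    {ν C : ℝ} (hν : 0 < ν)
    (hC : ∀ u : ℝ, 0 < u →
      (Summable fun k : ℤ => |χ (Real.exp (-(k:ℝ)) * u)| * |(k:ℝ) - Real.log u| ^ ν) ∧
      ∑' k : ℤ, |χ (Real.exp (-(k:ℝ)) * u)| * |(k:ℝ) - Real.log u| ^ ν ≤ C) :
    ∀ u : ℝ, 0 < u → ∑' k : ℤ, |χ (Real.exp (-(k:ℝ)) * u)| ≤ 2 * (2 ^ ν * C) + 1 := by
  intro u hu
  classical
  set L := Real.log u with hL
  set a : ℤ → ℝ := fun k => |χ (Real.exp (-(k:ℝ)) * u)| with ha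
  set k₀ : ℤ := round L with hk0
  have hfar : ∀ k : ℤ, k ≠ k₀ → a k ≤ 2 ^ ν * (a k * |(k:ℝ) - L| ^ ν) := by
    intro k hk
    have h1 : (1:ℝ) ≤ |(k:ℝ) - (k₀:ℝ)| := by
      rw [← Int.cast_sub]
      exact_mod_cast Int.one_le_abs (sub_ne_zero.mpr hk)
    have h2 : |L - (k₀:ℝ)| ≤ 1/2 := abs_sub_round L
    have h3 : (1:ℝ)/2 ≤ |(k:ℝ) - L| := by
      have := abs_sub_abs_le_abs_sub ((k:ℝ) - (k₀:ℝ)) (L - (k₀:ℝ))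
      have h4 : |(k:ℝ) - (k₀:ℝ) - (L - (k₀:ℝ))| = |(k:ℝ) - L| := by ring_nf
      nlinarith [abs_nonneg ((k:ℝ) - L)]
    have h5 : ((1:ℝ)/2) ^ ν ≤ |(k:ℝ) - L| ^ ν :=
      Real.rpow_le_rpow (by norm_num) h3 hν.le
    have h6 : (2:ℝ) ^ ν * ((1:ℝ)/2) ^ ν = 1 := by
      rw [← Real.mul_rpow (by norm_num) (by norm_num)]
      norm_num
    calc a k = a k * ((2:ℝ) ^ ν * ((1:ℝ)/2) ^ ν) := by rw [h6, mul_one]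
      _ ≤ a k * ((2:ℝ) ^ ν * |(k:ℝ) - L| ^ ν) := by
          apply mul_le_mul_of_nonneg_left _ (abs_nonneg _)
          exact mul_le_mul_of_nonneg_left h5 (Real.rpow_nonneg (by norm_num) ν)
      _ = 2 ^ ν * (a k * |(k:ℝ) - L| ^ ν) := by ring
  have hsummoment := (hC u hu).1
  have hmom := (hC u hu).2
  have hsum2 : Summable fun k : ℤ => 2 ^ ν * (a k * |(k:ℝ) - L| ^ ν) := hsummoment.mul_left _
  have htail : ∑' k : ℤ, (if k = k₀ then 0 else a k) ≤ 2 ^ ν * C := by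
    have hs1 : Summable fun k : ℤ => (if k = k₀ then 0 else a k) := by
      apply Summable.of_nonneg_of_le (fun k => by positivity) _ (hsum u hu)
      intro k; split <;> simp [ha, abs_nonneg]
    calc ∑' k : ℤ, (if k = k₀ then 0 else a k)
        ≤ ∑' k : ℤ, 2 ^ ν * (a k * |(k:ℝ) - L| ^ ν) := by
          apply Summable.tsum_le_tsum _ hs1 hsum2
          intro k
          split
          · positivity
          · exact hfar k (by assumption)
      _ = 2 ^ ν * ∑' k : ℤ, (a k * |(k:ℝ) - L| ^ ν) := tsum_mul_left
      _ ≤ 2 ^ ν * C := by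
          apply mul_le_mul_of_nonneg_left hmom (Real.rpow_nonneg (by norm_num) ν)
  have hpu := (hpart u hu).tsum_eq
  have hsum0 : Summable fun k : ℤ => χ (Real.exp (-(k:ℝ)) * u) := (hsum u hu).of_abs
  have hsplit := Summable.tsum_eq_add_tsum_ite hsum0 k₀
  have hk0bd : a k₀ ≤ 1 + 2 ^ ν * C := by
    have : χ (Real.exp (-(k₀:ℝ)) * u) = 1 - ∑' k : ℤ, (if k = k₀ then 0 else χ (Real.exp (-(k:ℝ)) * u)) := by
      rw [hpu] at hsplit; linarith
    rw [ha]
    simp only [this]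
    have habs : |∑' k : ℤ, (if k = k₀ then 0 else χ (Real.exp (-(k:ℝ)) * u))| ≤ 2 ^ ν * C := by
      have hn : (Summable fun k : ℤ => |if k = k₀ then 0 else χ (Real.exp (-(k:ℝ)) * u)|) := by
        apply Summable.of_nonneg_of_le (fun k => abs_nonneg _) _ (hsum u hu)
        intro k; split <;> simp [abs_nonneg]
      calc |∑' k : ℤ, (if k = k₀ then 0 else χ (Real.exp (-(k:ℝ)) * u))|
          ≤ ∑' k : ℤ, |if k = k₀ then 0 else χ (Real.exp (-(k:ℝ)) * u)| :=
            abs_tsum_le' _ hn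
        _ = ∑' k : ℤ, (if k = k₀ then 0 else a k) := by
            apply tsum_congr; intro k; split <;> simp [ha]
        _ ≤ 2 ^ ν * C := htail
    have h8 : ∀ T : ℝ, |T| ≤ 2 ^ ν * C → |1 - T| ≤ 1 + 2 ^ ν * C := by
      intro T hT
      have := abs_le.mp hT
      rw [abs_le]; constructor <;> nlinarith
    exact h8 _ habs
  have := Summable.tsum_eq_add_tsum_ite (hsum u hu) k₀
  rw [this]
  have : a k₀ + ∑' k : ℤ, (if k = k₀ then 0 else a k) ≤ (1 + 2 ^ ν * C) + 2 ^ ν * C := by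
    apply add_le_add hk0bd htail
  simp only [ha] at this ⊢
  linarith


/-- Behaviour at a removable discontinuity. -/
theorem stmt8 (χ f : ℝ → ℝ) (hχ : IsKernel χ)
    (B : ℝ) (hf : ∀ x : ℝ, 0 < x → |f x| ≤ B)
    (t : ℝ) (ht : 0 < t) (ℓ : ℝ)
    (hfp : Filter.Tendsto f (nhdsWithin t (Set.Ioi t)) (nhds ℓ))
    (hfm : Filter.Tendsto f (nhdsWithin t (Set.Iio t)) (nhds ℓ)) :
    Filter.Tendsto (fun w => expSamp χ f w t)
      (Filter.atTop ⊓ Filter.principal {w : ℝ | ∃ m : ℤ, w * Real.log t = (m : ℝ)})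
      (nhds (ℓ + χ 1 * (f t - ℓ))) ∧
    Filter.Tendsto (fun w => expSamp χ f w t)
      (Filter.atTop ⊓ Filter.principal {w : ℝ | ∀ m : ℤ, w * Real.log t ≠ (m : ℝ)})
      (nhds ℓ) ∧
    (χ 1 = 0 → Filter.Tendsto (fun w => expSamp χ f w t) Filter.atTop (nhds ℓ)) := by
  classical
  obtain ⟨hsum, hpart, ν, hν, C, hC⟩ := hχ
  set M : ℝ := 2 * (2 ^ ν * C) + 1 with hMdef
  have hM : ∀ u : ℝ, 0 < u → ∑' k : ℤ, |χ (Real.exp (-(k:ℝ)) * u)| ≤ M :=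
    kernel_abs_bound hsum hpart hν hC
  have hMnonneg : 0 ≤ M := by
    have h0 : (0:ℝ) ≤ ∑' k : ℤ, |χ (Real.exp (-(k:ℝ)) * 1)| :=
      tsum_nonneg fun k => abs_nonneg _
    linarith [hM 1 one_pos]
  set D : ℝ := B + |ℓ| with hDdef
  have hB : 0 ≤ B := le_trans (abs_nonneg _) (hf 1 one_pos)
  have hD0 : 0 ≤ D := by positivity
  have hDf : ∀ x : ℝ, 0 < x → |f x - ℓ| ≤ D := by
    intro x hx
    calc |f x - ℓ| ≤ |f x| + |ℓ| := abs_sub _ _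
      _ ≤ B + |ℓ| := by linarith [hf x hx]
  -- the key quantitative estimate
  have key : ∀ ε : ℝ, 0 < ε → ∃ W : ℝ, 1 ≤ W ∧ ∀ w : ℝ, W ≤ w →
      ((∀ m : ℤ, w * Real.log t = (m:ℝ) →
        |expSamp χ f w t - (ℓ + χ 1 * (f t - ℓ))| < ε) ∧
       ((∀ m : ℤ, w * Real.log t ≠ (m:ℝ)) → |expSamp χ f w t - ℓ| < ε)) := by
    intro ε hε
    set ε₁ : ℝ := ε / (2 * (M + 1)) with hε₁def
    have hε₁ : 0 < ε₁ := by positivity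
    -- one-sided limits
    obtain ⟨δp, hδp, hp⟩ := Metric.tendsto_nhdsWithin_nhds.mp hfp ε₁ hε₁
    obtain ⟨δm, hδm, hm⟩ := Metric.tendsto_nhdsWithin_nhds.mp hfm ε₁ hε₁
    -- continuity of exp at log t
    obtain ⟨δ, hδ, hexp⟩ := Metric.continuousAt_iff.mp Real.continuous_exp.continuousAt
      (min δp δm) (lt_min hδp hδm)
    have hnear : ∀ x : ℝ, 0 < x → x ≠ t → |Real.log x - Real.log t| < δ →
        |f x - ℓ| < ε₁ := by
      intro x hx hxt hlog
      have h1 : dist (Real.log x) (Real.log t) < δ := by rwa [Real.dist_eq]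
      have h2 := hexp h1
      rw [Real.exp_log hx, Real.exp_log ht, Real.dist_eq] at h2
      rcases lt_or_gt_of_ne hxt with hlt | hgt
      · have := hm (mem_Iio.mpr hlt) (by rw [Real.dist_eq]; exact lt_of_lt_of_le h2 (min_le_right _ _))
        rwa [Real.dist_eq] at this
      · have := hp (mem_Ioi.mpr hgt) (by rw [Real.dist_eq]; exact lt_of_lt_of_le h2 (min_le_left _ _))
        rwa [Real.dist_eq] at this
    -- far tail tends to zero
    have htend : Tendsto (fun w : ℝ => D * C / (w * δ) ^ ν) atTop (nhds 0) := by
      apply Tendsto.div_atTop tendsto_const_nhds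
      exact (tendsto_rpow_atTop hν).comp (Tendsto.atTop_mul_const hδ tendsto_id)
    have hev : ∀ᶠ w : ℝ in atTop, D * C / (w * δ) ^ ν < ε / 2 := by
      have := Metric.tendsto_nhds.mp htend (ε/2) (by positivity)
      filter_upwards [this] with w hw
      rw [Real.dist_eq, sub_zero] at hw
      exact lt_of_le_of_lt (le_abs_self _) hw
    obtain ⟨W₀, hW₀⟩ := eventually_atTop.mp (hev.and (eventually_ge_atTop (1:ℝ)))
    refine ⟨max W₀ 1, le_max_right _ _, ?_⟩
    intro w hw
    have hw1 : 1 ≤ w := le_trans (le_max_right _ _) hw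
    have hw0 : 0 < w := lt_of_lt_of_le one_pos hw1
    obtain ⟨htail, -⟩ := hW₀ w (le_trans (le_max_left _ _) hw)
    -- setup
    set u : ℝ := Real.exp (Real.log t * w) with hudef
    have hu : 0 < u := Real.exp_pos _
    have htw : t ^ w = u := Real.rpow_def_of_pos ht w
    have hlogu : Real.log u = w * Real.log t := by
      rw [hudef, Real.log_exp]; ring
    set a : ℤ → ℝ := fun k => χ (Real.exp (-(k:ℝ)) * u) with hadef
    set F : ℤ → ℝ := fun k => a k * (f (Real.exp ((k:ℝ) / w)) - ℓ) with hFdef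
    have hasum : Summable fun k : ℤ => |a k| := hsum u hu
    have hFabs : ∀ k : ℤ, |F k| ≤ |a k| * D := by
      intro k
      rw [hFdef, abs_mul]
      exact mul_le_mul_of_nonneg_left (hDf _ (Real.exp_pos _)) (abs_nonneg _)
    have hFsum : Summable F := by
      apply Summable.of_norm_bounded (g := fun k => |a k| * D) (hasum.mul_right D)
      intro k; exact hFabs k
    -- expSamp = ℓ + ∑ F
    have hS : expSamp χ f w t = ℓ + ∑' k : ℤ, F k := by
      have h1 : Summable fun k : ℤ => a k * f (Real.exp ((k:ℝ)/w)) := by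
        apply Summable.of_norm_bounded (g := fun k => |a k| * B) (hasum.mul_right B)
        intro k
        rw [Real.norm_eq_abs, abs_mul]
        exact mul_le_mul_of_nonneg_left (hf _ (Real.exp_pos _)) (abs_nonneg _)
      have h2 : Summable fun k : ℤ => a k * ℓ := hasum.of_abs.mul_right ℓ
      have h3 : ∑' k : ℤ, F k = (∑' k : ℤ, a k * f (Real.exp ((k:ℝ)/w))) - ∑' k : ℤ, a k * ℓ := by
        rw [← Summable.tsum_sub h1 h2]
        apply tsum_congr; intro k; rw [hFdef]; ring
      have h4 : ∑' k : ℤ, a k * ℓ = ℓ := by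
        rw [tsum_mul_right, (hpart u hu).tsum_eq, one_mul]
      rw [expSamp]
      simp only [htw]
      rw [h3, h4]
      ring
    -- the pointwise bound for off-center terms
    set Q : ℝ := D / (w * δ) ^ ν with hQdef
    have hwδ : 0 < (w * δ) ^ ν := Real.rpow_pos_of_pos (by positivity) ν
    have hQ0 : 0 ≤ Q := by positivity
    have hbound : ∀ k : ℤ, (k:ℝ) ≠ w * Real.log t →
        |F k| ≤ ε₁ * |a k| + Q * (|a k| * |(k:ℝ) - Real.log u| ^ ν) := by
      intro k hk
      by_cases hcase : |(k:ℝ)/w - Real.log t| < δ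
      · -- near: use continuity
        have hx : (0:ℝ) < Real.exp ((k:ℝ)/w) := Real.exp_pos _
        have hxt : Real.exp ((k:ℝ)/w) ≠ t := by
          intro hxe
          apply hk
          have : (k:ℝ)/w = Real.log t := by
            rw [← Real.log_exp ((k:ℝ)/w), hxe]
          field_simp at this
          linarith [this]
        have hlogx : |Real.log (Real.exp ((k:ℝ)/w)) - Real.log t| < δ := by
          rwa [Real.log_exp]
        have hfx := hnear _ hx hxt hlogx
        have : |F k| ≤ |a k| * ε₁ := by
          rw [hFdef, abs_mul]
          exact mul_le_mul_of_nonneg_left hfx.le (abs_nonneg _)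
        have hterm2 : 0 ≤ Q * (|a k| * |(k:ℝ) - Real.log u| ^ ν) := by positivity
        calc |F k| ≤ |a k| * ε₁ := this
          _ = ε₁ * |a k| := by ring
          _ ≤ ε₁ * |a k| + Q * (|a k| * |(k:ℝ) - Real.log u| ^ ν) := by linarith
      · -- far
        push_neg at hcase
        have hwd : w * δ ≤ |(k:ℝ) - Real.log u| := by
          have hid : (k:ℝ) - Real.log u = w * ((k:ℝ)/w - Real.log t) := by
            rw [hlogu]; field_simp
          have habs : |(k:ℝ) - Real.log u| = w * |(k:ℝ)/w - Real.log t| := by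
            rw [hid, abs_mul, abs_of_pos hw0]
          rw [habs]
          exact mul_le_mul_of_nonneg_left hcase (le_of_lt hw0)
        have hpow : (w * δ) ^ ν ≤ |(k:ℝ) - Real.log u| ^ ν :=
          Real.rpow_le_rpow (by positivity) hwd hν.le
        have h1 : |F k| ≤ |a k| * D := hFabs k
        have h2 : |a k| * D ≤ Q * (|a k| * |(k:ℝ) - Real.log u| ^ ν) := by
          rw [hQdef]
          rw [div_mul_eq_mul_div, le_div_iff₀ hwδ]
          calc |a k| * D * (w * δ) ^ ν ≤ |a k| * D * |(k:ℝ) - Real.log u| ^ ν := by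
                apply mul_le_mul_of_nonneg_left hpow (by positivity)
            _ = D * (|a k| * |(k:ℝ) - Real.log u| ^ ν) := by ring
        have hterm1 : 0 ≤ ε₁ * |a k| := by positivity
        linarith
    -- remainder estimate
    have hmsum : Summable fun k : ℤ => |a k| * |(k:ℝ) - Real.log u| ^ ν := (hC u hu).1
    have hmom : ∑' k : ℤ, |a k| * |(k:ℝ) - Real.log u| ^ ν ≤ C := (hC u hu).2
    have hMa : ∑' k : ℤ, |a k| ≤ M := hM u hu
    have hRHSsum : Summable fun k : ℤ =>
        ε₁ * |a k| + Q * (|a k| * |(k:ℝ) - Real.log u| ^ ν) :=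
      (hasum.mul_left ε₁).add (hmsum.mul_left Q)
    have hremainder : ∀ G : ℤ → ℝ,
        (∀ k : ℤ, |G k| ≤ ε₁ * |a k| + Q * (|a k| * |(k:ℝ) - Real.log u| ^ ν)) →
        |∑' k : ℤ, G k| < ε := by
      intro G hG
      have hGsum : Summable fun k : ℤ => |G k| :=
        Summable.of_nonneg_of_le (fun k => abs_nonneg _) hG hRHSsum
      have h1 : |∑' k : ℤ, G k| ≤ ∑' k : ℤ, |G k| := abs_tsum_le' _ hGsum
      have h2 : ∑' k : ℤ, |G k| ≤
          ∑' k : ℤ, (ε₁ * |a k| + Q * (|a k| * |(k:ℝ) - Real.log u| ^ ν)) :=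
        Summable.tsum_le_tsum hG hGsum hRHSsum
      have h3 : ∑' k : ℤ, (ε₁ * |a k| + Q * (|a k| * |(k:ℝ) - Real.log u| ^ ν))
          = ε₁ * (∑' k : ℤ, |a k|) + Q * ∑' k : ℤ, (|a k| * |(k:ℝ) - Real.log u| ^ ν) := by
        rw [Summable.tsum_add (hasum.mul_left ε₁) (hmsum.mul_left Q), tsum_mul_left, tsum_mul_left]
      have h4 : ε₁ * (∑' k : ℤ, |a k|) ≤ ε₁ * M :=
        mul_le_mul_of_nonneg_left hMa hε₁.le
      have h5 : Q * ∑' k : ℤ, (|a k| * |(k:ℝ) - Real.log u| ^ ν) ≤ Q * C :=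
        mul_le_mul_of_nonneg_left hmom hQ0
      have h6 : ε₁ * M < ε / 2 := by
        rw [hε₁def]
        rw [div_mul_eq_mul_div, div_lt_div_iff₀ (by positivity) (by norm_num)]
        nlinarith
      have h7 : Q * C = D * C / (w * δ) ^ ν := by rw [hQdef]; ring
      have h8 : Q * C < ε / 2 := by rw [h7]; exact htail
      calc |∑' k : ℤ, G k| ≤ ∑' k : ℤ, |G k| := h1
        _ ≤ ∑' k : ℤ, (ε₁ * |a k| + Q * (|a k| * |(k:ℝ) - Real.log u| ^ ν)) := h2
        _ = ε₁ * (∑' k : ℤ, |a k|) + Q * ∑' k : ℤ, (|a k| * |(k:ℝ) - Real.log u| ^ ν) := h3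
        _ ≤ ε₁ * M + Q * C := add_le_add h4 h5
        _ < ε / 2 + ε / 2 := add_lt_add h6 h8
        _ = ε := by ring
    constructor
    · -- integer case
      intro m hm'
      have hFm : F m = χ 1 * (f t - ℓ) := by
        have e1 : Real.exp (-(m:ℝ)) * u = 1 := by
          rw [hudef, ← Real.exp_add]
          rw [← Real.exp_zero]
          congr 1
          have : Real.log t * w = (m:ℝ) := by rw [mul_comm]; exact hm'
          linarith
        have e2 : Real.exp ((m:ℝ)/w) = t := by
          have : (m:ℝ)/w = Real.log t := by
            rw [← hm']; field_simp
          rw [this, Real.exp_log ht]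
        rw [hFdef]
        simp only [hadef]
        rw [e1, e2]
      have hsplit := Summable.tsum_eq_add_tsum_ite hFsum m
      have hGbd : ∀ k : ℤ, |if k = m then 0 else F k| ≤
          ε₁ * |a k| + Q * (|a k| * |(k:ℝ) - Real.log u| ^ ν) := by
        intro k
        split
        · simp; positivity
        · apply hbound
          intro hk'
          rename_i hne
          apply hne
          have : ((k:ℝ)) = ((m:ℝ)) := by rw [hk', hm']
          exact_mod_cast this
      have := hremainder _ hGbd
      have heq : expSamp χ f w t - (ℓ + χ 1 * (f t - ℓ))
          = ∑' k : ℤ, (if k = m then 0 else F k) := by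
        rw [hS, hsplit, hFm]; ring
      rwa [heq]
    · -- non-integer case
      intro hm'
      have hGbd : ∀ k : ℤ, |F k| ≤
          ε₁ * |a k| + Q * (|a k| * |(k:ℝ) - Real.log u| ^ ν) := by
        intro k
        apply hbound
        intro hk'
        exact hm' k hk'.symm
      have := hremainder _ hGbd
      have heq : expSamp χ f w t - ℓ = ∑' k : ℤ, F k := by rw [hS]; ring
      rwa [heq]
  -- finish: three conclusions
  refine ⟨?_, ?_, ?_⟩
  · rw [Metric.tendsto_nhds]
    intro ε hε
    obtain ⟨W, hW1, hW⟩ := key ε hε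
    rw [eventually_inf_principal]
    filter_upwards [eventually_ge_atTop W] with w hw hmem
    obtain ⟨m, hm'⟩ := hmem
    rw [Real.dist_eq]
    exact (hW w hw).1 m hm'
  · rw [Metric.tendsto_nhds]
    intro ε hε
    obtain ⟨W, hW1, hW⟩ := key ε hε
    rw [eventually_inf_principal]
    filter_upwards [eventually_ge_atTop W] with w hw hmem
    rw [Real.dist_eq]
    exact (hW w hw).2 hmem
  · intro hχ1
    rw [Metric.tendsto_nhds]
    intro ε hε
    obtain ⟨W, hW1, hW⟩ := key ε hε
    filter_upwards [eventually_ge_atTop W] with w hw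
    rw [Real.dist_eq]
    by_cases hcase : ∃ m : ℤ, w * Real.log t = (m:ℝ)
    · obtain ⟨m, hm'⟩ := hcase
      have := (hW w hw).1 m hm'
      rwa [hχ1, zero_mul, add_zero] at this
    · push_neg at hcase
      exact (hW w hw).2 hcase
end

section
/- Let χ be a kernel with M_ν(χ) < ∞ for some 0 < ν < 1, and M₀(χ) < ∞. Let f: ℝ⁺ → ℝ be bounded and log-uniformly continuous. Then for sufficiently large w > 0 and every t ∈ ℝ⁺: |(S_w^χ f)(t) - f(t)| ≤ ω(f, w^{-ν})·[M_ν(χ) + 2 M₀(χ)] + 2^{ν+1} ‖f‖_∞ M_ν(χ) w^{-ν}. -/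
open Real Filter Set MeasureTheory

lemma logMod_bdd (f : ℝ → ℝ) (δ N : ℝ) (hN : ∀ x : ℝ, 0 < x → |f x| ≤ N) :
    BddAbove {d : ℝ | ∃ p q : ℝ, 0 < p ∧ 0 < q ∧ |Real.log p - Real.log q| ≤ δ ∧ d = |f p - f q|} := by
  refine ⟨2 * N, ?_⟩
  rintro d ⟨p, q, hp, hq, _, rfl⟩
  calc |f p - f q| ≤ |f p| + |f q| := abs_sub _ _
    _ ≤ N + N := add_le_add (hN p hp) (hN q hq)
    _ = 2 * N := by ring

lemma le_logMod (f : ℝ → ℝ) (δ N : ℝ) (hN : ∀ x : ℝ, 0 < x → |f x| ≤ N)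
    (p q : ℝ) (hp : 0 < p) (hq : 0 < q) (h : |Real.log p - Real.log q| ≤ δ) :
    |f p - f q| ≤ logMod f δ :=
  le_csSup (logMod_bdd f δ N hN) ⟨p, q, hp, hq, h, rfl⟩

lemma logMod_nonneg (f : ℝ → ℝ) (δ N : ℝ) (hδ : 0 ≤ δ) (hN : ∀ x : ℝ, 0 < x → |f x| ≤ N) :
    0 ≤ logMod f δ := by
  have := le_logMod f δ N hN 1 1 one_pos one_pos (by simpa using hδ)
  simpa using this

lemma logMod_chain (f : ℝ → ℝ) (δ N : ℝ) (hN : ∀ x : ℝ, 0 < x → |f x| ≤ N) :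
    ∀ n : ℕ, ∀ p q : ℝ, 0 < p → 0 < q → |Real.log p - Real.log q| ≤ n * δ →
      |f p - f q| ≤ n * logMod f δ := by
  intro n
  induction n with
  | zero =>
    intro p q hp hq h
    simp only [Nat.cast_zero, zero_mul] at h ⊢
    have h0 : Real.log p = Real.log q := by
      have h1 := abs_nonneg (Real.log p - Real.log q)
      have h2 : |Real.log p - Real.log q| = 0 := le_antisymm h h1
      linarith [abs_eq_zero.mp h2]
    have : p = q := Real.log_injOn_pos (Set.mem_Ioi.mpr hp) (Set.mem_Ioi.mpr hq) h0
    simp [this]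
  | succ n ih =>
    intro p q hp hq h
    set Δ := Real.log p - Real.log q with hΔ
    set r := Real.exp (Real.log p - Δ / (n + 1)) with hr
    have hrpos : 0 < r := Real.exp_pos _
    have hlogr : Real.log r = Real.log p - Δ / (n + 1) := Real.log_exp _
    have hn1 : (0:ℝ) < (n:ℝ) + 1 := by positivity
    have h1 : |Real.log p - Real.log r| ≤ δ := by
      rw [hlogr]
      have e : Real.log p - (Real.log p - Δ / (n + 1)) = Δ / (n + 1) := by ring
      rw [e, abs_div, abs_of_pos hn1, div_le_iff₀ hn1]
      calc |Δ| ≤ (n + 1) * δ := by exact_mod_cast h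
        _ = δ * ((n:ℝ) + 1) := by ring
    have h2 : |Real.log r - Real.log q| ≤ n * δ := by
      rw [hlogr]
      have e : Real.log p - Δ / (n + 1) - Real.log q = Δ * (n / (n + 1)) := by
        field_simp [hΔ]; ring
      rw [e, abs_mul]
      have habs : |(n:ℝ) / (n + 1)| = n / (n+1) := abs_of_nonneg (by positivity)
      rw [habs]
      have hΔle : |Δ| ≤ ((n:ℝ) + 1) * δ := by exact_mod_cast h
      calc |Δ| * ((n:ℝ) / (n + 1)) ≤ (((n:ℝ) + 1) * δ) * ((n:ℝ) / (n + 1)) := by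
            apply mul_le_mul_of_nonneg_right hΔle (by positivity)
        _ = n * δ := by field_simp
    calc |f p - f q| ≤ |f p - f r| + |f r - f q| := abs_sub_le _ _ _
      _ ≤ logMod f δ + n * logMod f δ :=
          add_le_add (le_logMod f δ N hN p r hp hrpos h1) (ih r q hrpos hq h2)
      _ = (n + 1 : ℕ) * logMod f δ := by push_cast; ring

lemma logMod_est (f : ℝ → ℝ) (δ N : ℝ) (hδ : 0 < δ) (hN : ∀ x : ℝ, 0 < x → |f x| ≤ N)
    (p q : ℝ) (hp : 0 < p) (hq : 0 < q) :
    |f p - f q| ≤ (1 + |Real.log p - Real.log q| / δ) * logMod f δ := by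
  set Δ := |Real.log p - Real.log q| with hΔ
  have hΔ0 : 0 ≤ Δ := abs_nonneg _
  set n : ℕ := ⌊Δ / δ⌋₊ + 1 with hn
  have h1 : Δ ≤ n * δ := by
    have h := Nat.lt_floor_add_one (Δ / δ)
    have h' : Δ / δ ≤ (n:ℝ) := by push_cast [hn]; linarith
    calc Δ = Δ / δ * δ := by field_simp
      _ ≤ n * δ := mul_le_mul_of_nonneg_right h' hδ.le
  have h2 : (n:ℝ) ≤ 1 + Δ / δ := by
    have := Nat.floor_le (show (0:ℝ) ≤ Δ / δ by positivity)
    push_cast [hn]; linarith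
  calc |f p - f q| ≤ n * logMod f δ := logMod_chain f δ N hN n p q hp hq h1
    _ ≤ (1 + Δ / δ) * logMod f δ :=
        mul_le_mul_of_nonneg_right h2 (logMod_nonneg f δ N hδ.le hN)

/-- Degree of approximation in terms of the logarithmic modulus of continuity. -/
theorem stmt9 (χ f : ℝ → ℝ) (ν : ℝ) (hν0 : 0 < ν) (hν1 : ν < 1)
    (hχ1 : ∀ u : ℝ, 0 < u → HasSum (fun k : ℤ => χ (Real.exp (-(k : ℝ)) * u)) 1)
    (hs0 : ∀ u : ℝ, 0 < u → Summable fun k : ℤ => |χ (Real.exp (-(k : ℝ)) * u)|)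
    (hsν : ∀ u : ℝ, 0 < u →
      Summable fun k : ℤ => |χ (Real.exp (-(k : ℝ)) * u)| * |(k : ℝ) - Real.log u| ^ ν)
    (hbν : BddAbove (Set.range fun u : {u : ℝ // 0 < u} =>
      ∑' k : ℤ, |χ (Real.exp (-(k : ℝ)) * u.1)| * |(k : ℝ) - Real.log u.1| ^ ν))
    (hb0 : BddAbove (Set.range fun u : {u : ℝ // 0 < u} =>
      ∑' k : ℤ, |χ (Real.exp (-(k : ℝ)) * u.1)| * |(k : ℝ) - Real.log u.1| ^ (0 : ℝ)))
    (hfb : BddAbove (Set.range fun x : {x : ℝ // 0 < x} => |f x.1|))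
    (hfc : LogUniformCont f) :
    ∃ W : ℝ, 0 < W ∧ ∀ w : ℝ, W ≤ w → ∀ t : ℝ, 0 < t →
      |expSamp χ f w t - f t| ≤
        logMod f (w ^ (-ν)) * (absMoment χ ν + 2 * absMoment χ 0) +
          2 ^ (ν + 1) * supNormPos f * absMoment χ ν * w ^ (-ν) := by
  set Mν := absMoment χ ν with hMν_def
  set M0 := absMoment χ 0 with hM0_def
  set N := supNormPos f with hN_def
  have hNb : ∀ x : ℝ, 0 < x → |f x| ≤ N := fun x hx => le_ciSup hfb ⟨x, hx⟩
  have hN0 : 0 ≤ N := le_trans (abs_nonneg _) (hNb 1 one_pos)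
  have hMν : ∀ u : ℝ, 0 < u →
      ∑' k : ℤ, |χ (Real.exp (-(k:ℝ)) * u)| * |(k:ℝ) - Real.log u| ^ ν ≤ Mν :=
    fun u hu => le_ciSup hbν ⟨u, hu⟩
  have hM0 : ∀ u : ℝ, 0 < u → ∑' k : ℤ, |χ (Real.exp (-(k:ℝ)) * u)| ≤ M0 := by
    intro u hu
    have h := le_ciSup hb0 ⟨u, hu⟩
    rw [hM0_def, absMoment]
    simpa [Real.rpow_zero] using h
  have hfd : ∀ p : ℝ, 0 < p → ∀ q : ℝ, 0 < q → |f p - f q| ≤ 2 * N := by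
    intro p hp q hq
    calc |f p - f q| ≤ |f p| + |f q| := abs_sub _ _
      _ ≤ N + N := add_le_add (hNb p hp) (hNb q hq)
      _ = 2 * N := by ring
  refine ⟨1, one_pos, fun w hw t ht => ?_⟩
  have hw0 : (0:ℝ) < w := lt_of_lt_of_le one_pos hw
  set u := t ^ w with hu_def
  have hu : 0 < u := Real.rpow_pos_of_pos ht w
  set L := Real.log u with hL
  set δ := w ^ (-ν) with hδdef
  have hδ : 0 < δ := Real.rpow_pos_of_pos hw0 _
  set ω := logMod f δ with hω_def
  have hω0 : 0 ≤ ω := logMod_nonneg f δ N hδ.le hNb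
  set a : ℤ → ℝ := fun k => |χ (Real.exp (-(k:ℝ)) * u)| with ha_def
  set b : ℤ → ℝ := fun k => a k * |(k:ℝ) - L| ^ ν with hb_def
  have ha : Summable a := hs0 u hu
  have hb : Summable b := hsν u hu
  have ha0 : ∀ k, 0 ≤ a k := fun k => abs_nonneg _
  have hb0' : ∀ k, 0 ≤ b k := fun k =>
    mul_nonneg (ha0 k) (Real.rpow_nonneg (abs_nonneg _) _)
  have hbsum : ∑' k, b k ≤ Mν := hMν u hu
  have hasum : ∑' k, a k ≤ M0 := hM0 u hu
  have hMν0 : 0 ≤ Mν := le_trans (tsum_nonneg hb0') hbsum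
  have hM00 : 0 ≤ M0 := le_trans (tsum_nonneg ha0) hasum
  set g : ℤ → ℝ := fun k => a k * |f (Real.exp ((k:ℝ)/w)) - f t| with hg_def
  have hg0 : ∀ k, 0 ≤ g k := fun k => mul_nonneg (ha0 k) (abs_nonneg _)
  have hgle : ∀ k, g k ≤ a k * (2 * N) := fun k =>
    mul_le_mul_of_nonneg_left (hfd _ (Real.exp_pos _) t ht) (ha0 k)
  have hgs : Summable g := Summable.of_nonneg_of_le hg0 hgle (ha.mul_right (2*N))
  -- Step 1 : the error is bounded by ∑' g
  have hsf : Summable (fun k : ℤ => χ (Real.exp (-(k:ℝ)) * u) * f (Real.exp ((k:ℝ)/w))) := by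
    rw [← summable_abs_iff]
    refine Summable.of_nonneg_of_le (fun k => abs_nonneg _) (fun k => ?_) (ha.mul_right N)
    rw [abs_mul]
    exact mul_le_mul_of_nonneg_left (hNb _ (Real.exp_pos _)) (abs_nonneg _)
  have h1 : HasSum (fun k : ℤ => χ (Real.exp (-(k:ℝ)) * u)) 1 := hχ1 u hu
  have hdiff : expSamp χ f w t - f t
      = ∑' k : ℤ, χ (Real.exp (-(k:ℝ)) * u) * (f (Real.exp ((k:ℝ)/w)) - f t) := by
    have h2 : HasSum (fun k : ℤ => χ (Real.exp (-(k:ℝ)) * u) * f t) (f t) := by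
      simpa using h1.mul_right (f t)
    have h3 : HasSum (fun k : ℤ => χ (Real.exp (-(k:ℝ)) * u) * (f (Real.exp ((k:ℝ)/w)) - f t))
        (expSamp χ f w t - f t) := by
      have h4 := hsf.hasSum.sub h2
      have e : expSamp χ f w t
          = ∑' k : ℤ, χ (Real.exp (-(k:ℝ)) * u) * f (Real.exp ((k:ℝ)/w)) := by
        simp [expSamp, hu_def]
      rw [e]
      simpa [mul_sub] using h4
    exact h3.tsum_eq.symm
  have key : |expSamp χ f w t - f t| ≤ ∑' k, g k := by
    rw [hdiff]
    have heq : (fun k : ℤ => ‖χ (Real.exp (-(k:ℝ)) * u) * (f (Real.exp ((k:ℝ)/w)) - f t)‖) = g := by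
      funext k
      simp [hg_def, ha_def, Real.norm_eq_abs, abs_mul]
    calc |∑' k : ℤ, χ (Real.exp (-(k:ℝ)) * u) * (f (Real.exp ((k:ℝ)/w)) - f t)|
        ≤ ∑' k : ℤ, ‖χ (Real.exp (-(k:ℝ)) * u) * (f (Real.exp ((k:ℝ)/w)) - f t)‖ :=
          norm_tsum_le_tsum_norm (heq ▸ hgs)
      _ = ∑' k, g k := by rw [heq]
  -- Step 2 : the split
  set gN : ℤ → ℝ := fun k => if |(k:ℝ) - L| ≤ w/2 then g k else 0 with hgN_def
  set gF : ℤ → ℝ := fun k => if |(k:ℝ) - L| ≤ w/2 then 0 else g k with hgF_def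
  have hgN0 : ∀ k, 0 ≤ gN k := by
    intro k; simp only [hgN_def]; split
    · exact hg0 k
    · exact le_rfl
  have hgF0 : ∀ k, 0 ≤ gF k := by
    intro k; simp only [hgF_def]; split
    · exact le_rfl
    · exact hg0 k
  have hgNle : ∀ k, gN k ≤ g k := by
    intro k; simp only [hgN_def]; split
    · exact le_rfl
    · exact hg0 k
  have hgFle : ∀ k, gF k ≤ g k := by
    intro k; simp only [hgF_def]; split
    · exact hg0 k
    · exact le_rfl
  have hgNs : Summable gN := Summable.of_nonneg_of_le hgN0 hgNle hgs
  have hgFs : Summable gF := Summable.of_nonneg_of_le hgF0 hgFle hgs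
  have hsplit : ∑' k, g k = ∑' k, gN k + ∑' k, gF k := by
    rw [← Summable.tsum_add hgNs hgFs]
    congr 1; funext k
    simp only [hgN_def, hgF_def]
    by_cases hc : |(k:ℝ) - L| ≤ w/2 <;> simp [hc]
  have hwδ : w * δ = w ^ (1 - ν) := by
    rw [hδdef, show (1:ℝ) - ν = 1 + (-ν) by ring, Real.rpow_add hw0, Real.rpow_one]
  have hchain : ∀ k : ℤ, g k ≤ a k * ((1 + |(k:ℝ) - L| / (w * δ)) * ω) := by
    intro k
    have hp : (0:ℝ) < Real.exp ((k:ℝ)/w) := Real.exp_pos _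
    have hest := logMod_est f δ N hδ hNb (Real.exp ((k:ℝ)/w)) t hp ht
    have hlog : |Real.log (Real.exp ((k:ℝ)/w)) - Real.log t| = |(k:ℝ) - L| / w := by
      rw [Real.log_exp, hL, hu_def, Real.log_rpow ht]
      rw [show (k:ℝ)/w - Real.log t = ((k:ℝ) - w * Real.log t)/w by field_simp]
      rw [abs_div, abs_of_pos hw0]
    rw [hlog, div_div] at hest
    exact mul_le_mul_of_nonneg_left hest (ha0 k)
  have hnear : ∀ k : ℤ, gN k ≤ ω * (a k + b k) := by
    intro k
    simp only [hgN_def]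
    by_cases hk : |(k:ℝ) - L| ≤ w/2
    · rw [if_pos hk]
      have hx0 : (0:ℝ) ≤ |(k:ℝ) - L| := abs_nonneg _
      have e1 : |(k:ℝ) - L| = |(k:ℝ) - L| ^ ν * |(k:ℝ) - L| ^ (1-ν) := by
        rw [← Real.rpow_add' hx0 (by intro h; linarith)]
        rw [show ν + (1-ν) = (1:ℝ) by ring, Real.rpow_one]
      have hxb : |(k:ℝ) - L| / (w*δ) ≤ |(k:ℝ) - L| ^ ν := by
        rw [hwδ, div_le_iff₀ (Real.rpow_pos_of_pos hw0 _)]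
        calc |(k:ℝ) - L| = |(k:ℝ) - L| ^ ν * |(k:ℝ) - L| ^ (1-ν) := e1
          _ ≤ |(k:ℝ) - L| ^ ν * w ^ (1-ν) :=
            mul_le_mul_of_nonneg_left
              (Real.rpow_le_rpow hx0 (le_trans hk (by linarith)) (by linarith))
              (Real.rpow_nonneg hx0 ν)
      calc g k ≤ a k * ((1 + |(k:ℝ) - L| / (w * δ)) * ω) := hchain k
        _ ≤ a k * ((1 + |(k:ℝ) - L| ^ ν) * ω) := by
            apply mul_le_mul_of_nonneg_left _ (ha0 k)
            exact mul_le_mul_of_nonneg_right (by linarith) hω0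
        _ = ω * (a k + b k) := by simp only [hb_def]; ring
    · rw [if_neg hk]
      exact mul_nonneg hω0 (add_nonneg (ha0 k) (hb0' k))
  have h2ν : (0:ℝ) < 2 ^ ν := Real.rpow_pos_of_pos two_pos ν
  have hfar : ∀ k : ℤ, gF k ≤ (2*N) * ((2 ^ ν * δ) * b k) := by
    intro k
    simp only [hgF_def]
    by_cases hk : |(k:ℝ) - L| ≤ w/2
    · rw [if_pos hk]
      exact mul_nonneg (by linarith) (mul_nonneg (mul_nonneg h2ν.le hδ.le) (hb0' k))
    · rw [if_neg hk]
      push_neg at hk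
      have hw2 : (0:ℝ) < w/2 := by linarith
      have hx : (w/2) ^ ν ≤ |(k:ℝ) - L| ^ ν := Real.rpow_le_rpow hw2.le hk.le hν0.le
      have hone : (1:ℝ) ≤ (w/2)^(-ν) * |(k:ℝ)-L|^ν := by
        have hinv : (w/2)^(-ν) * (w/2)^ν = 1 := by
          rw [← Real.rpow_add hw2]; norm_num
        calc (1:ℝ) = (w/2)^(-ν) * (w/2)^ν := hinv.symm
          _ ≤ (w/2)^(-ν) * |(k:ℝ)-L|^ν :=
            mul_le_mul_of_nonneg_left hx (Real.rpow_nonneg hw2.le _)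
      have hhalf : (w/2)^(-ν) = 2 ^ ν * δ := by
        rw [Real.rpow_neg hw2.le, Real.div_rpow hw0.le (by norm_num : (0:ℝ) ≤ 2),
          inv_div, hδdef, Real.rpow_neg hw0.le, div_eq_mul_inv]
      calc g k ≤ a k * (2*N) := hgle k
        _ ≤ ((w/2)^(-ν) * |(k:ℝ)-L|^ν * a k) * (2*N) := by
            apply mul_le_mul_of_nonneg_right _ (by linarith)
            calc a k = 1 * a k := (one_mul _).symm
              _ ≤ ((w/2)^(-ν) * |(k:ℝ)-L|^ν) * a k := mul_le_mul_of_nonneg_right hone (ha0 k)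
        _ = (2*N) * ((2 ^ ν * δ) * b k) := by rw [hhalf]; simp only [hb_def]; ring
  have hnearS : ∑' k, gN k ≤ ω * (Mν + 2 * M0) := by
    have h5 : ∑' k, gN k ≤ ∑' k, ω * (a k + b k) :=
      Summable.tsum_le_tsum hnear hgNs ((ha.add hb).mul_left ω)
    rw [tsum_mul_left, Summable.tsum_add ha hb] at h5
    have h5' : ∑' k, a k + ∑' k, b k ≤ Mν + 2 * M0 := by linarith
    calc ∑' k, gN k ≤ ω * (∑' k, a k + ∑' k, b k) := h5
      _ ≤ ω * (Mν + 2 * M0) := mul_le_mul_of_nonneg_left h5' hω0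
  have hfarS : ∑' k, gF k ≤ 2 ^ (ν+1) * N * Mν * δ := by
    have h6 : ∑' k, gF k ≤ ∑' k, (2*N) * ((2 ^ ν * δ) * b k) :=
      Summable.tsum_le_tsum hfar hgFs ((hb.mul_left _).mul_left _)
    rw [tsum_mul_left, tsum_mul_left] at h6
    have h7 : (2*N) * ((2 ^ ν * δ) * ∑' k, b k) ≤ (2*N) * ((2 ^ ν * δ) * Mν) := by
      apply mul_le_mul_of_nonneg_left _ (by linarith)
      exact mul_le_mul_of_nonneg_left hbsum (mul_nonneg h2ν.le hδ.le)
    have h8 : (2:ℝ) ^ (ν+1) = 2 ^ ν * 2 := by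
      rw [Real.rpow_add two_pos, Real.rpow_one]
    calc ∑' k, gF k ≤ (2*N) * ((2 ^ ν * δ) * Mν) := le_trans h6 h7
      _ = 2 ^ (ν+1) * N * Mν * δ := by rw [h8]; ring
  calc |expSamp χ f w t - f t| ≤ ∑' k, g k := key
    _ = ∑' k, gN k + ∑' k, gF k := hsplit
    _ ≤ ω * (Mν + 2 * M0) + 2 ^ (ν+1) * N * Mν * δ := add_le_add hnearS hfarS
end

section
/- Let χ be a kernel with M₀(χ), M₁(χ) < ∞, f: ℝ⁺ → ℝ bounded and log-uniformly continuous, and f̄ with |f(e^{k/w}) - f̄(e^{k/w})| ≤ ξ for all k. Then ‖f - S_w^χ f̄‖_∞ ≤ (M₀(χ) + M₁(χ))·ω(f, 1/w) + ξ·M₀(χ). -/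
open Real Filter Set MeasureTheory

private lemma chain_aux (f : ℝ → ℝ) (δ ω : ℝ) (hω : 0 ≤ ω)
    (hle : ∀ p q : ℝ, 0 < p → 0 < q → |Real.log p - Real.log q| ≤ δ → |f p - f q| ≤ ω) :
    ∀ n : ℕ, ∀ p q : ℝ, 0 < p → 0 < q → |Real.log p - Real.log q| ≤ n * δ →
      |f p - f q| ≤ n * ω := by
  intro n
  induction n with
  | zero =>
    intro p q hp hq h
    have h0 : Real.log p - Real.log q = 0 := by
      have := abs_nonneg (Real.log p - Real.log q)
      have : |Real.log p - Real.log q| = 0 := le_antisymm (by simpa using h) this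
      exact abs_eq_zero.mp this
    have hpq : p = q := by
      rw [← Real.exp_log hp, ← Real.exp_log hq]
      congr 1; linarith
    simp [hpq]
  | succ n ih =>
    intro p q hp hq h
    push_cast at h
    by_cases hcase : |Real.log p - Real.log q| ≤ n * δ
    · refine le_trans (ih p q hp hq hcase) ?_
      push_cast; nlinarith
    push_neg at hcase
    have hδ : 0 < δ := by nlinarith
    set d := Real.log p - Real.log q with hd
    rcases le_or_gt 0 d with hsign | hsign
    · have hAbs : |d| = d := abs_of_nonneg hsign
      rw [hAbs] at h hcase
      set r := Real.exp (Real.log q + n * δ) with hr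
      have hrpos : 0 < r := Real.exp_pos _
      have hlogr : Real.log r = Real.log q + n * δ := Real.log_exp _
      have h1 : |Real.log p - Real.log r| ≤ δ := by
        rw [hlogr, abs_le]; constructor <;> nlinarith
      have h2 : |Real.log r - Real.log q| ≤ n * δ := by
        rw [hlogr]
        have : (0:ℝ) ≤ n * δ := by positivity
        rw [abs_le]; constructor <;> nlinarith
      calc |f p - f q| ≤ |f p - f r| + |f r - f q| := abs_sub_le _ _ _
        _ ≤ ω + n * ω := add_le_add (hle p r hp hrpos h1) (ih r q hrpos hq h2)
        _ = (n + 1 : ℕ) * ω := by push_cast; ring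
    · have hAbs : |d| = -d := abs_of_neg hsign
      rw [hAbs] at h hcase
      set r := Real.exp (Real.log q - n * δ) with hr
      have hrpos : 0 < r := Real.exp_pos _
      have hlogr : Real.log r = Real.log q - n * δ := Real.log_exp _
      have h1 : |Real.log p - Real.log r| ≤ δ := by
        rw [hlogr, abs_le]; constructor <;> nlinarith
      have h2 : |Real.log r - Real.log q| ≤ n * δ := by
        rw [hlogr]
        have : (0:ℝ) ≤ n * δ := by positivity
        rw [abs_le]; constructor <;> nlinarith
      calc |f p - f q| ≤ |f p - f r| + |f r - f q| := abs_sub_le _ _ _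
        _ ≤ ω + n * ω := add_le_add (hle p r hp hrpos h1) (ih r q hrpos hq h2)
        _ = (n + 1 : ℕ) * ω := by push_cast; ring

private lemma chain_real (f : ℝ → ℝ) (δ ω : ℝ) (hδ : 0 < δ) (hω : 0 ≤ ω)
    (hle : ∀ p q : ℝ, 0 < p → 0 < q → |Real.log p - Real.log q| ≤ δ → |f p - f q| ≤ ω)
    (lam : ℝ) (hlam : 0 ≤ lam) :
    ∀ p q : ℝ, 0 < p → 0 < q → |Real.log p - Real.log q| ≤ lam * δ →
      |f p - f q| ≤ (1 + lam) * ω := by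
  intro p q hp hq h
  have h1 : lam ≤ (⌈lam⌉₊ : ℝ) := Nat.le_ceil lam
  have h2 : (⌈lam⌉₊ : ℝ) < lam + 1 := Nat.ceil_lt_add_one hlam
  have := chain_aux f δ ω hω hle ⌈lam⌉₊ p q hp hq (le_trans h (by nlinarith))
  nlinarith

/-- Total round-off error estimate. -/
theorem stmt12 (χ f fbar : ℝ → ℝ) (hχ : IsKernel χ)
    (hb0 : BddAbove (Set.range fun u : {u : ℝ // 0 < u} =>
      ∑' k : ℤ, |χ (Real.exp (-(k : ℝ)) * u.1)| * |(k : ℝ) - Real.log u.1| ^ (0 : ℝ)))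
    (hs1 : ∀ u : ℝ, 0 < u →
      Summable fun k : ℤ => |χ (Real.exp (-(k : ℝ)) * u)| * |(k : ℝ) - Real.log u| ^ (1 : ℝ))
    (hb1 : BddAbove (Set.range fun u : {u : ℝ // 0 < u} =>
      ∑' k : ℤ, |χ (Real.exp (-(k : ℝ)) * u.1)| * |(k : ℝ) - Real.log u.1| ^ (1 : ℝ)))
    (B : ℝ) (hf : ∀ x : ℝ, 0 < x → |f x| ≤ B) (hfc : LogUniformCont f)
    (w : ℝ) (hw : 0 < w) (ξ : ℝ)
    (hξ : ∀ k : ℤ, |f (Real.exp ((k : ℝ) / w)) - fbar (Real.exp ((k : ℝ) / w))| ≤ ξ) :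
    ∀ t : ℝ, 0 < t →
      |f t - expSamp χ fbar w t| ≤
        (absMoment χ 0 + absMoment χ 1) * logMod f (1 / w) + ξ * absMoment χ 0 := by
  intro t ht
  set ω := logMod f (1 / w) with hωdef
  set δ := 1 / w with hδdef
  have hδpos : 0 < δ := by positivity
  -- facts about logMod
  set S : Set ℝ := {d : ℝ | ∃ p q : ℝ, 0 < p ∧ 0 < q ∧ |Real.log p - Real.log q| ≤ δ ∧
      d = |f p - f q|} with hS
  have hSbdd : BddAbove S := by
    refine ⟨2 * B, ?_⟩
    rintro d ⟨p, q, hp, hq, _, rfl⟩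
    have := hf p hp; have := hf q hq
    have := abs_sub_abs_le_abs_sub (f p) (f q)
    have h2 : |f p - f q| ≤ |f p| + |f q| := abs_sub _ _
    linarith
  have hmem0 : (0 : ℝ) ∈ S := ⟨1, 1, one_pos, one_pos, by simp [le_of_lt hδpos], by simp⟩
  have hω0 : 0 ≤ ω := le_csSup hSbdd hmem0
  have hle : ∀ p q : ℝ, 0 < p → 0 < q → |Real.log p - Real.log q| ≤ δ → |f p - f q| ≤ ω := by
    intro p q hp hq h
    exact le_csSup hSbdd ⟨p, q, hp, hq, h, rfl⟩
  -- setup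
  set u := t ^ w with hu
  have hupos : 0 < u := Real.rpow_pos_of_pos ht w
  have hlogu : Real.log u = w * Real.log t := Real.log_rpow ht w
  set a : ℤ → ℝ := fun k => |χ (Real.exp (-(k : ℝ)) * u)| with ha
  set lam : ℤ → ℝ := fun k => |(k : ℝ) - Real.log u| with hlam
  have hsum0 : Summable a := hχ.1 u hupos
  have hsum1 : Summable fun k => a k * lam k := by
    have := hs1 u hupos
    simpa [Real.rpow_one] using this
  have hHas : HasSum (fun k : ℤ => χ (Real.exp (-(k : ℝ)) * u)) 1 := hχ.2.1 u hupos
  have hξ0 : 0 ≤ ξ := le_trans (abs_nonneg _) (hξ 0)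
  -- pointwise estimate
  have hpt : ∀ k : ℤ, |f t - fbar (Real.exp ((k : ℝ) / w))| ≤ (1 + lam k) * ω + ξ := by
    intro k
    have hek : (0 : ℝ) < Real.exp ((k : ℝ) / w) := Real.exp_pos _
    have hlog : |Real.log t - Real.log (Real.exp ((k : ℝ) / w))| ≤ lam k * δ := by
      rw [Real.log_exp, hlam]
      have hval : Real.log t - (k : ℝ) / w = -(((k : ℝ) - Real.log u) / w) := by
        rw [hlogu]; field_simp; ring
      rw [hval, abs_neg, abs_div, abs_of_pos hw, hδdef, div_eq_mul_one_div]
    have h1 : |f t - f (Real.exp ((k : ℝ) / w))| ≤ (1 + lam k) * ω :=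
      chain_real f δ ω hδpos hω0 hle (lam k) (abs_nonneg _) t _ ht hek hlog
    calc |f t - fbar (Real.exp ((k : ℝ) / w))|
        ≤ |f t - f (Real.exp ((k : ℝ) / w))| + |f (Real.exp ((k : ℝ) / w)) -
            fbar (Real.exp ((k : ℝ) / w))| := abs_sub_le _ _ _
      _ ≤ (1 + lam k) * ω + ξ := add_le_add h1 (hξ k)
  -- summabilities
  have hfbarbd : ∀ k : ℤ, |fbar (Real.exp ((k : ℝ) / w))| ≤ B + ξ := by
    intro k
    have hek : (0 : ℝ) < Real.exp ((k : ℝ) / w) := Real.exp_pos _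
    have h1 := hf _ hek
    have h2 := hξ k
    calc |fbar (Real.exp ((k : ℝ) / w))|
        ≤ |f (Real.exp ((k : ℝ) / w))| + |f (Real.exp ((k : ℝ) / w)) -
            fbar (Real.exp ((k : ℝ) / w))| := by
          have := abs_sub_abs_le_abs_sub (fbar (Real.exp ((k : ℝ) / w)))
            (f (Real.exp ((k : ℝ) / w)))
          rw [abs_sub_comm] at this
          linarith
      _ ≤ B + ξ := add_le_add h1 h2
  set g : ℤ → ℝ := fun k => χ (Real.exp (-(k : ℝ)) * u) * fbar (Real.exp ((k : ℝ) / w))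
    with hg
  have hsumg : Summable g := by
    refine Summable.of_norm ?_
    refine Summable.of_nonneg_of_le (fun k => norm_nonneg _)
      (fun k => ?_) (hsum0.mul_right (B + ξ))
    rw [Real.norm_eq_abs, abs_mul]
    exact mul_le_mul_of_nonneg_left (hfbarbd k) (abs_nonneg _)
  -- rewrite the difference
  have heq : f t - expSamp χ fbar w t =
      ∑' k : ℤ, χ (Real.exp (-(k : ℝ)) * u) * (f t - fbar (Real.exp ((k : ℝ) / w))) := by
    have hft : f t = ∑' k : ℤ, χ (Real.exp (-(k : ℝ)) * u) * f t := by
      rw [(hHas.mul_right (f t)).tsum_eq, one_mul]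
    have hES : expSamp χ fbar w t = ∑' k : ℤ, g k := rfl
    rw [hES]
    nth_rewrite 1 [hft]
    rw [← Summable.tsum_sub (hHas.summable.mul_right (f t)) hsumg]
    exact tsum_congr fun k => by rw [hg]; ring
  rw [heq]
  -- bound the sum
  set bound : ℤ → ℝ := fun k => a k * ω + (a k * lam k) * ω + a k * ξ with hbd
  have hsumbd : Summable bound :=
    ((hsum0.mul_right ω).add (hsum1.mul_right ω)).add (hsum0.mul_right ξ)
  have habs : ∀ k : ℤ, |χ (Real.exp (-(k : ℝ)) * u) *
      (f t - fbar (Real.exp ((k : ℝ) / w)))| ≤ bound k := by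
    intro k
    rw [abs_mul]
    have h1 : a k * |f t - fbar (Real.exp ((k : ℝ) / w))| ≤ a k * ((1 + lam k) * ω + ξ) :=
      mul_le_mul_of_nonneg_left (hpt k) (abs_nonneg _)
    calc |χ (Real.exp (-(k : ℝ)) * u)| * |f t - fbar (Real.exp ((k : ℝ) / w))|
        ≤ a k * ((1 + lam k) * ω + ξ) := h1
      _ = bound k := by rw [hbd]; ring
  have hsumabs : Summable fun k : ℤ => |χ (Real.exp (-(k : ℝ)) * u) *
      (f t - fbar (Real.exp ((k : ℝ) / w)))| :=
    Summable.of_nonneg_of_le (fun k => abs_nonneg _) habs hsumbd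
  have key : |∑' k : ℤ, χ (Real.exp (-(k : ℝ)) * u) *
      (f t - fbar (Real.exp ((k : ℝ) / w)))| ≤ ∑' k : ℤ, bound k := by
    refine le_trans ?_ (Summable.tsum_le_tsum habs hsumabs hsumbd)
    simpa [abs_mul] using norm_tsum_le_tsum_norm (f := fun k : ℤ => χ (Real.exp (-(k : ℝ)) * u) * (f t - fbar (Real.exp ((k : ℝ) / w)))) (by simpa [abs_mul] using hsumabs)
  refine le_trans key ?_
  -- split the bound sum
  have hsplit : ∑' k : ℤ, bound k =
      (∑' k : ℤ, a k) * ω + (∑' k : ℤ, a k * lam k) * ω + (∑' k : ℤ, a k) * ξ := by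
    have e1 : ∀ k, bound k = (a k * ω + a k * lam k * ω) + a k * ξ := fun k => by rw [hbd]
    rw [tsum_congr e1,
      Summable.tsum_add ((hsum0.mul_right ω).add (hsum1.mul_right ω)) (hsum0.mul_right ξ),
      Summable.tsum_add (hsum0.mul_right ω) (hsum1.mul_right ω),
      tsum_mul_right, tsum_mul_right, tsum_mul_right]
  rw [hsplit]
  -- compare with absMoments
  have hS0 : (∑' k : ℤ, a k) ≤ absMoment χ 0 := by
    have : (∑' k : ℤ, a k) = ∑' k : ℤ, |χ (Real.exp (-(k : ℝ)) * u)| *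
        |(k : ℝ) - Real.log u| ^ (0 : ℝ) := by
      refine tsum_congr fun k => ?_
      rw [Real.rpow_zero, mul_one]
    rw [this]
    exact le_ciSup hb0 ⟨u, hupos⟩
  have hS1 : (∑' k : ℤ, a k * lam k) ≤ absMoment χ 1 := by
    have : (∑' k : ℤ, a k * lam k) = ∑' k : ℤ, |χ (Real.exp (-(k : ℝ)) * u)| *
        |(k : ℝ) - Real.log u| ^ (1 : ℝ) := by
      refine tsum_congr fun k => ?_
      rw [Real.rpow_one]
    rw [this]
    exact le_ciSup hb1 ⟨u, hupos⟩
  have hsum1nn : (0:ℝ) ≤ ∑' k : ℤ, a k * lam k :=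
    tsum_nonneg fun k => mul_nonneg (abs_nonneg _) (abs_nonneg _)
  have hsum0nn : (0:ℝ) ≤ ∑' k : ℤ, a k := tsum_nonneg fun k => abs_nonneg _
  nlinarith [mul_le_mul_of_nonneg_right hS0 hω0, mul_le_mul_of_nonneg_right hS1 hω0,
    mul_le_mul_of_nonneg_right hS0 hξ0]
end

section
/- Let χ_a, χ_b be two continuous kernels supported in [e^{-a}, e^a] and [e^{-b}, e^b] respectively, and α ∈ ℝ. Define χ(u) := (1-α)·χ_a(2u e^{-a-1}) + α·χ_b(2u e^b). Then χ(1) = 0, χ satisfies ∑_{k∈ℤ} χ(e^{-k}u) = 1 for all u > 0, and has finite absolute moments M_ν(χ) of every order ν; moreover ∫₀¹ χ(u) u^{2kπi - 1} du equals 0 for every integer k ≠ 0 and equals α for k = 0. -/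
open Real Filter Set MeasureTheory

lemma moment_bound (g : ℝ → ℝ) (M R : ℝ) (hM : 0 ≤ M) (hR : 1 ≤ R)
    (hb : ∀ v : ℝ, |g v| ≤ M)
    (hz : ∀ (k : ℤ) (u : ℝ), 0 < u → R < |(k : ℝ) - Real.log u| →
      g (Real.exp (-(k : ℝ)) * u) = 0)
    (ν : ℝ) (hν : 0 < ν) (u : ℝ) (hu : 0 < u) :
    (Summable fun k : ℤ => |g (Real.exp (-(k : ℝ)) * u)| * |(k : ℝ) - Real.log u| ^ ν) ∧
    ∑' k : ℤ, |g (Real.exp (-(k : ℝ)) * u)| * |(k : ℝ) - Real.log u| ^ ν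
      ≤ (2 * R + 2) * (M * R ^ ν) := by
  set x := Real.log u with hx
  set F : Finset ℤ := Finset.Icc ⌈x - R⌉ ⌊x + R⌋ with hF
  have hout : ∀ k : ℤ, k ∉ F →
      |g (Real.exp (-(k : ℝ)) * u)| * |(k : ℝ) - x| ^ ν = 0 := by
    intro k hk
    have hk' : k < ⌈x - R⌉ ∨ ⌊x + R⌋ < k := by
      by_contra hcon
      push_neg at hcon
      exact hk (Finset.mem_Icc.mpr hcon)
    have habs : R < |(k : ℝ) - x| := by
      rcases hk' with h | h
      · have : (k : ℝ) < x - R := Int.lt_ceil.mp h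
        rw [abs_sub_comm]
        calc R < x - k := by linarith
        _ ≤ |x - (k : ℝ)| := le_abs_self _
      · have : x + R < (k : ℝ) := Int.floor_lt.mp h
        calc R < (k : ℝ) - x := by linarith
        _ ≤ |(k : ℝ) - x| := le_abs_self _
    rw [hz k u hu habs, abs_zero, zero_mul]
  have hbound : ∀ k ∈ F, |g (Real.exp (-(k : ℝ)) * u)| * |(k : ℝ) - x| ^ ν ≤ M * R ^ ν := by
    intro k hk
    obtain ⟨h1, h2⟩ := Finset.mem_Icc.mp hk
    have h1' : x - R ≤ (k : ℝ) := Int.ceil_le.mp h1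
    have h2' : (k : ℝ) ≤ x + R := Int.le_floor.mp h2
    have habsle : |(k : ℝ) - x| ≤ R := abs_le.mpr ⟨by linarith, by linarith⟩
    exact mul_le_mul (hb _) (Real.rpow_le_rpow (abs_nonneg _) habsle hν.le)
      (Real.rpow_nonneg (abs_nonneg _) _) hM
  refine ⟨summable_of_ne_finset_zero hout, ?_⟩
  rw [tsum_eq_sum hout]
  calc ∑ k ∈ F, |g (Real.exp (-(k : ℝ)) * u)| * |(k : ℝ) - x| ^ ν
      ≤ F.card • (M * R ^ ν) := Finset.sum_le_card_nsmul F _ _ hbound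
    _ = (F.card : ℝ) * (M * R ^ ν) := nsmul_eq_mul _ _
    _ ≤ (2 * R + 2) * (M * R ^ ν) := by
        refine mul_le_mul_of_nonneg_right ?_ (mul_nonneg hM (Real.rpow_nonneg (by linarith) _))
        have hcard : F.card = (⌊x + R⌋ + 1 - ⌈x - R⌉).toNat := Int.card_Icc _ _
        have h3 : ((⌊x + R⌋ + 1 - ⌈x - R⌉).toNat : ℤ) = (⌊x + R⌋ + 1 - ⌈x - R⌉) ⊔ 0 :=
          Int.toNat_eq_max _
        have h1 : (⌊x + R⌋ : ℝ) ≤ x + R := Int.floor_le _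
        have h2 : x - R ≤ (⌈x - R⌉ : ℝ) := Int.le_ceil _
        have h4 : ((⌊x + R⌋ + 1 - ⌈x - R⌉ : ℤ) : ℝ) ≤ 2 * R + 2 := by push_cast; linarith
        have h5 : ((((⌊x + R⌋ + 1 - ⌈x - R⌉).toNat : ℤ)) : ℝ) ≤ 2 * R + 2 := by
          rw [h3, Int.cast_max]
          exact max_le h4 (by push_cast; linarith)
        rw [hcard]
        exact_mod_cast h5

lemma kernelMellin (G : ℝ → ℝ) (c₁ c₂ : ℝ) (hc₁ : 0 < c₁)
    (hG : ContinuousOn G (Set.Ioi 0))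
    (hsup : ∀ u : ℝ, u ∉ Set.Icc c₁ c₂ → G u = 0)
    (hpart : ∀ u : ℝ, 0 < u → HasSum (fun k : ℤ => G (Real.exp (-(k : ℝ)) * u)) 1)
    (k : ℤ) :
    (∫ v in Set.Ioi (0 : ℝ),
        (v : ℂ) ^ (2 * (Real.pi : ℂ) * (k : ℂ) * Complex.I - 1) * (G v : ℂ))
      = if k = 0 then 1 else 0 := by
  set c : ℂ := 2 * (Real.pi : ℂ) * (k : ℂ) * Complex.I with hc
  set e : ℝ → ℂ := fun x => Complex.exp (c * x) with he
  set H : ℝ → ℂ := fun x => ((G (Real.exp x) : ℝ) : ℂ) with hH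
  -- continuity
  have hGR : Continuous fun x : ℝ => G (Real.exp x) :=
    hG.comp_continuous Real.continuous_exp fun x => Real.exp_pos x
  have hHcont : Continuous H := Complex.continuous_ofReal.comp hGR
  have hecont : Continuous e := by
    exact Complex.continuous_exp.comp (continuous_const.mul Complex.continuous_ofReal)
  have hFcont : Continuous fun x => e x * H x := hecont.mul hHcont
  -- Step 1 : change of variables v = exp x
  have hstep1 : (∫ v in Set.Ioi (0 : ℝ), (v : ℂ) ^ (c - 1) * (G v : ℂ))
      = ∫ x : ℝ, e x * H x := by
    have himg : Real.exp '' Set.univ = Set.Ioi 0 := by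
      rw [Set.image_univ, Real.range_exp]
    have hch := integral_image_eq_integral_abs_deriv_smul (MeasurableSet.univ)
      (fun x _ => (Real.hasDerivAt_exp x).hasDerivWithinAt)
      (Real.exp_injective.injOn) (fun v : ℝ => (v : ℂ) ^ (c - 1) * (G v : ℂ))
    rw [himg] at hch
    rw [hch, MeasureTheory.setIntegral_univ]
    congr 1
    funext x
    have hx0 : ((Real.exp x : ℝ) : ℂ) ≠ 0 := by
      exact_mod_cast (Real.exp_pos x).ne'
    have hlog : Complex.log ((Real.exp x : ℝ) : ℂ) = (x : ℂ) := by
      rw [← Complex.ofReal_log (Real.exp_pos x).le, Real.log_exp]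
    rw [Complex.cpow_def_of_ne_zero hx0, hlog]
    rw [abs_of_pos (Real.exp_pos x), Complex.real_smul, Complex.ofReal_exp]
    simp only [e, H]
    rw [show Complex.exp (x:ℂ) * (Complex.exp ((x:ℂ) * (c - 1)) * (G (Real.exp x) : ℂ))
        = (Complex.exp (x:ℂ) * Complex.exp ((x:ℂ) * (c - 1))) * (G (Real.exp x) : ℂ) by ring,
      ← Complex.exp_add, show (x:ℂ) + (x:ℂ) * (c - 1) = c * (x:ℂ) by ring]
  rw [hstep1]
  -- choice of N
  set N : ℕ := ⌈|Real.log c₁| + |Real.log c₂|⌉₊ + 1 with hN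
  have hNge : |Real.log c₁| + |Real.log c₂| + 1 ≤ (N : ℝ) := by
    have := Nat.le_ceil (|Real.log c₁| + |Real.log c₂|)
    push_cast [hN]
    linarith
  have habs1 : 0 ≤ |Real.log c₁| := abs_nonneg _
  have habs2 : 0 ≤ |Real.log c₂| := abs_nonneg _
  -- vanishing of H
  have hH0 : ∀ x : ℝ, x < Real.log c₁ ∨ Real.log c₂ < x → H x = 0 := by
    intro x hx
    have : G (Real.exp x) = 0 := by
      apply hsup
      intro hmem
      obtain ⟨h1, h2⟩ := hmem
      rcases hx with h | h
      · have : Real.exp x < Real.exp (Real.log c₁) := Real.exp_lt_exp.mpr h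
        rw [Real.exp_log hc₁] at this; linarith
      · have hc₂ : 0 < c₂ := lt_of_lt_of_le (Real.exp_pos x) h2
        have : Real.exp (Real.log c₂) < Real.exp x := Real.exp_lt_exp.mpr h
        rw [Real.exp_log hc₂] at this; linarith
    simp [H, this]
  -- Step 3: restrict to Ioc (-N) (N+1)
  have hcompl : ∀ x : ℝ, x ∉ Set.Ioc (-(N : ℝ)) ((N : ℝ) + 1) → e x * H x = 0 := by
    intro x hx
    rw [Set.mem_Ioc, not_and_or, not_lt, not_le] at hx
    have : H x = 0 := by
      apply hH0
      rcases hx with h | h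
      · left; have : -(N:ℝ) ≤ -(|Real.log c₁| + |Real.log c₂| + 1) := by linarith
        have h2 : -(|Real.log c₁|) ≤ Real.log c₁ := neg_abs_le _
        linarith
      · right; have : Real.log c₂ ≤ |Real.log c₂| := le_abs_self _
        linarith
    rw [this, mul_zero]
  rw [← MeasureTheory.setIntegral_eq_integral_of_forall_compl_eq_zero hcompl]
  have hle : -(N : ℝ) ≤ (N : ℝ) + 1 := by
    have : (0:ℝ) ≤ (N:ℝ) := Nat.cast_nonneg _
    linarith
  rw [← intervalIntegral.integral_of_le hle]
  -- Step 5: split into unit intervals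
  set a : ℕ → ℝ := fun i => -(N : ℝ) + i with ha
  have hsplit := intervalIntegral.sum_integral_adjacent_intervals
    (a := a) (μ := volume) (n := 2 * N + 1)
    (fun i _ => (hFcont.intervalIntegrable _ _))
  have ha0 : a 0 = -(N : ℝ) := by simp [ha]
  have han : a (2 * N + 1) = (N : ℝ) + 1 := by simp [ha]; push_cast; ring
  rw [ha0, han] at hsplit
  rw [← hsplit]
  -- Step 6: shift each interval
  have hshift : ∀ i : ℕ, (∫ x in a i..a (i + 1), e x * H x)
      = ∫ x in (0:ℝ)..1, e x * H (x + a i) := by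
    intro i
    have h1 : (∫ x in (0:ℝ)..1, (fun y => e y * H y) (x + a i))
        = ∫ x in (0 + a i)..(1 + a i), e x * H x :=
      intervalIntegral.integral_comp_add_right (fun y => e y * H y) (a i)
    rw [zero_add] at h1
    have h2 : a (i + 1) = 1 + a i := by simp [ha]; push_cast; ring
    rw [h2, ← h1]
    apply intervalIntegral.integral_congr
    intro x _
    simp only []
    congr 1
    -- e (x + a i) = e x
    have hint : a i = ((i : ℤ) - (N : ℤ) : ℤ) := by push_cast [ha]; ring
    rw [hint]
    set m : ℤ := (i : ℤ) - (N : ℤ)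
    show e (x + (m : ℝ)) = e x
    simp only [e]
    rw [show c * ((x + (m : ℝ) : ℝ) : ℂ) = c * x + ((k * m : ℤ) : ℂ) * (2 * (Real.pi:ℂ) * Complex.I) by push_cast [hc]; ring]
    rw [Complex.exp_add, Complex.exp_int_mul_two_pi_mul_I, mul_one]
  have hsum : ∀ i ∈ Finset.range (2 * N + 1), (∫ x in a i..a (i+1), e x * H x)
      = ∫ x in (0:ℝ)..1, e x * H (x + a i) := fun i _ => hshift i
  rw [Finset.sum_congr rfl hsum]
  rw [← intervalIntegral.integral_finset_sum (f := fun (i : ℕ) (x : ℝ) => e x * H (x + a i))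
    (fun i _ =>
      ((hecont.mul (hHcont.comp (continuous_add_right (a i)))).intervalIntegrable _ _))]
  -- Step 8: periodization equals 1 on [0,1]
  have hper : ∀ x ∈ Set.uIcc (0:ℝ) 1,
      (∑ i ∈ Finset.range (2 * N + 1), e x * H (x + a i)) = e x := by
    intro x hx
    rw [Set.uIcc_of_le (by norm_num : (0:ℝ) ≤ 1)] at hx
    obtain ⟨hx0, hx1⟩ := hx
    rw [← Finset.mul_sum]
    have hreal : (∑ i ∈ Finset.range (2 * N + 1), G (Real.exp (x + a i))) = 1 := by
      have hps := hpart (Real.exp x) (Real.exp_pos x)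
      have htsum := hps.tsum_eq
      set s : Finset ℤ := (Finset.range (2 * N + 1)).map
        ⟨fun i : ℕ => (N : ℤ) - (i : ℤ), fun i j h => Nat.cast_injective (sub_right_injective h)⟩ with hs
      have hmem : ∀ k' : ℤ, k' ∈ s ↔ ∃ i : ℕ, i < 2 * N + 1 ∧ (N : ℤ) - (i : ℤ) = k' := by
        intro k'; simp [hs, Finset.mem_map, Finset.mem_range]; exact Iff.rfl
      have hvanish : ∀ k' : ℤ, k' ∉ s → G (Real.exp (-(k' : ℝ)) * Real.exp x) = 0 := by
        intro k' hk'
        have hrange : (N : ℤ) < k' ∨ k' < -(N : ℤ) := by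
          by_contra hcon
          push_neg at hcon
          exact hk' ((hmem k').mpr ⟨(N - k').toNat, by omega, by omega⟩)
        rw [← Real.exp_add]
        apply hsup
        intro hmm
        obtain ⟨h1, h2⟩ := hmm
        rcases hrange with h | h
        · -- k' ≥ N + 1 : exp (x - k') < c₁
          have hk'' : (N : ℝ) + 1 ≤ (k' : ℝ) := by exact_mod_cast h
          have : -(k' : ℝ) + x < Real.log c₁ := by
            have h2' : -(|Real.log c₁|) ≤ Real.log c₁ := neg_abs_le _
            linarith
          have := Real.exp_lt_exp.mpr this
          rw [Real.exp_log hc₁] at this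
          linarith
        · have hk''' : k' ≤ -((N : ℤ) + 1) := by omega
          have hk'' : (k' : ℝ) ≤ -((N : ℝ) + 1) := by exact_mod_cast hk'''
          have hc₂ : 0 < c₂ := lt_of_lt_of_le (Real.exp_pos _) h2
          have : Real.log c₂ < -(k' : ℝ) + x := by
            have h2' : Real.log c₂ ≤ |Real.log c₂| := le_abs_self _
            linarith
          have := Real.exp_lt_exp.mpr this
          rw [Real.exp_log hc₂] at this
          linarith
      rw [tsum_eq_sum hvanish, Finset.sum_map] at htsum
      rw [← htsum]
      apply Finset.sum_congr rfl
      intro i _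
      show G (Real.exp (x + a i)) = G (Real.exp (-((((N : ℤ) - (i : ℤ) : ℤ)) : ℝ)) * Real.exp x)
      rw [← Real.exp_add]
      congr 1
      push_cast [ha]
      ring
    have : (∑ i ∈ Finset.range (2 * N + 1), H (x + a i)) = 1 := by
      simp only [H]
      rw [← Complex.ofReal_sum, hreal, Complex.ofReal_one]
    rw [this, mul_one]
  rw [intervalIntegral.integral_congr hper]
  -- Step 9
  by_cases hk : k = 0
  · subst hk
    simp only [e, hc]
    norm_num
  · have hcne : c ≠ 0 := by
      simp only [hc]
      refine mul_ne_zero (mul_ne_zero (mul_ne_zero two_ne_zero ?_) ?_) Complex.I_ne_zero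
      · exact_mod_cast Real.pi_ne_zero
      · exact_mod_cast hk
    rw [if_neg hk]
    simp only [e]
    rw [integral_exp_mul_complex hcne]
    have h1 : Complex.exp (c * (1:ℝ)) = 1 := by
      rw [show c * ((1:ℝ):ℂ) = (k : ℂ) * (2 * (Real.pi:ℂ) * Complex.I) by push_cast [hc]; ring]
      exact_mod_cast Complex.exp_int_mul_two_pi_mul_I k
    have h0 : Complex.exp (c * ((0:ℝ):ℂ)) = 1 := by norm_num
    rw [h1, h0, sub_self, zero_div]
/-- Construction of a kernel with χ(1) = 0 from two compactly supported kernels. -/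
theorem stmt14 (χa χb : ℝ → ℝ) (a b : ℝ) (ha : 0 < a) (hb : 0 < b)
    (hconta : ContinuousOn χa (Set.Ioi 0)) (hcontb : ContinuousOn χb (Set.Ioi 0))
    (hsupa : ∀ u : ℝ, u ∉ Set.Icc (Real.exp (-a)) (Real.exp a) → χa u = 0)
    (hsupb : ∀ u : ℝ, u ∉ Set.Icc (Real.exp (-b)) (Real.exp b) → χb u = 0)
    (hka : IsKernel χa) (hkb : IsKernel χb) (α : ℝ) :
    let χ : ℝ → ℝ :=
      fun u => (1 - α) * χa (2 * u * Real.exp (-a - 1)) + α * χb (2 * u * Real.exp b)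
    χ 1 = 0 ∧
    (∀ u : ℝ, 0 < u → HasSum (fun k : ℤ => χ (Real.exp (-(k : ℝ)) * u)) 1) ∧
    (∀ ν : ℝ, 0 < ν → ∃ C : ℝ, ∀ u : ℝ, 0 < u →
      (Summable fun k : ℤ => |χ (Real.exp (-(k : ℝ)) * u)| * |(k : ℝ) - Real.log u| ^ ν) ∧
      ∑' k : ℤ, |χ (Real.exp (-(k : ℝ)) * u)| * |(k : ℝ) - Real.log u| ^ ν ≤ C) ∧
    (∀ k : ℤ,
      (∫ v in Set.Ioo (0 : ℝ) 1,
          (v : ℂ) ^ (2 * (Real.pi : ℂ) * (k : ℂ) * Complex.I - 1) * (χ v : ℂ))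
        = if k = 0 then (α : ℂ) else 0) := by
  intro χ
  have hlog2a : Real.log 2 < 1 := by have := Real.log_two_lt_d9; linarith
  have hlog2b : 0 < Real.log 2 := Real.log_pos one_lt_two
  have he1 : (2 : ℝ) < Real.exp 1 := by have := Real.exp_one_gt_d9; linarith
  refine ⟨?_, ?_, ?_, ?_⟩
  · -- χ 1 = 0
    have h1 : χa (2 * 1 * Real.exp (-a - 1)) = 0 := by
      apply hsupa
      intro hmem
      have harg : 2 * 1 * Real.exp (-a - 1) = Real.exp (Real.log 2 + (-a - 1)) := by
        rw [Real.exp_add, Real.exp_log two_pos]; ring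
      rw [harg] at hmem
      have := Real.exp_le_exp.mp hmem.1
      linarith
    have h2 : χb (2 * 1 * Real.exp b) = 0 := by
      apply hsupb
      intro hmem
      have := hmem.2
      have := Real.exp_pos b
      linarith
    show (1 - α) * χa (2 * 1 * Real.exp (-a - 1)) + α * χb (2 * 1 * Real.exp b) = 0
    rw [h1, h2]; ring
  · -- partition of unity
    intro u hu
    have hA := (hka.2.1 (2 * u * Real.exp (-a - 1)) (by positivity)).mul_left (1 - α)
    have hB := (hkb.2.1 (2 * u * Real.exp b) (by positivity)).mul_left α
    have h := hA.add hB
    have h2 : ((1 - α) * 1 + α * 1 : ℝ) = 1 := by ring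
    rw [h2] at h
    have hfun : (fun k : ℤ => (1 - α) * χa (Real.exp (-(k : ℝ)) * (2 * u * Real.exp (-a - 1)))
          + α * χb (Real.exp (-(k : ℝ)) * (2 * u * Real.exp b)))
        = fun k : ℤ => χ (Real.exp (-(k : ℝ)) * u) := by
      funext k
      show _ = (1 - α) * χa (2 * (Real.exp (-(k : ℝ)) * u) * Real.exp (-a - 1))
          + α * χb (2 * (Real.exp (-(k : ℝ)) * u) * Real.exp b)
      have e1 : Real.exp (-(k : ℝ)) * (2 * u * Real.exp (-a - 1))
          = 2 * (Real.exp (-(k : ℝ)) * u) * Real.exp (-a - 1) := by ring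
      have e2 : Real.exp (-(k : ℝ)) * (2 * u * Real.exp b)
          = 2 * (Real.exp (-(k : ℝ)) * u) * Real.exp b := by ring
      rw [e1, e2]
    rw [hfun] at h
    exact h
  · -- moments
    intro ν hν
    have hMa : ∃ M : ℝ, 0 ≤ M ∧ ∀ v : ℝ, |χa v| ≤ M := by
      obtain ⟨C, hC⟩ := (isCompact_Icc (a := Real.exp (-a))
          (b := Real.exp a)).exists_bound_of_continuousOn
        (hconta.mono fun v hv => lt_of_lt_of_le (Real.exp_pos _) hv.1)
      refine ⟨max C 0, le_max_right _ _, fun v => ?_⟩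
      by_cases hv : v ∈ Set.Icc (Real.exp (-a)) (Real.exp a)
      · exact le_trans (by simpa [Real.norm_eq_abs] using hC v hv) (le_max_left _ _)
      · rw [hsupa v hv, abs_zero]; exact le_max_right _ _
    have hMb : ∃ M : ℝ, 0 ≤ M ∧ ∀ v : ℝ, |χb v| ≤ M := by
      obtain ⟨C, hC⟩ := (isCompact_Icc (a := Real.exp (-b))
          (b := Real.exp b)).exists_bound_of_continuousOn
        (hcontb.mono fun v hv => lt_of_lt_of_le (Real.exp_pos _) hv.1)
      refine ⟨max C 0, le_max_right _ _, fun v => ?_⟩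
      by_cases hv : v ∈ Set.Icc (Real.exp (-b)) (Real.exp b)
      · exact le_trans (by simpa [Real.norm_eq_abs] using hC v hv) (le_max_left _ _)
      · rw [hsupb v hv, abs_zero]; exact le_max_right _ _
    obtain ⟨Ma, hMa0, hMa'⟩ := hMa
    obtain ⟨Mb, hMb0, hMb'⟩ := hMb
    set M : ℝ := |1 - α| * Ma + |α| * Mb with hMdef
    have hM : 0 ≤ M := by positivity
    set R : ℝ := 2 * a + 2 * b + 2 with hRdef
    have hR : 1 ≤ R := by linarith
    have hbχ : ∀ v : ℝ, |χ v| ≤ M := by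
      intro v
      show |(1 - α) * χa (2 * v * Real.exp (-a - 1)) + α * χb (2 * v * Real.exp b)| ≤ M
      calc |(1 - α) * χa (2 * v * Real.exp (-a - 1)) + α * χb (2 * v * Real.exp b)|
          ≤ |(1 - α) * χa (2 * v * Real.exp (-a - 1))| + |α * χb (2 * v * Real.exp b)| :=
            abs_add_le _ _
        _ = |1 - α| * |χa (2 * v * Real.exp (-a - 1))| + |α| * |χb (2 * v * Real.exp b)| := by
            rw [abs_mul, abs_mul]
        _ ≤ M := add_le_add
            (mul_le_mul_of_nonneg_left (hMa' _) (abs_nonneg _))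
            (mul_le_mul_of_nonneg_left (hMb' _) (abs_nonneg _))
    have hz : ∀ (k : ℤ) (u : ℝ), 0 < u → R < |(k : ℝ) - Real.log u| →
        χ (Real.exp (-(k : ℝ)) * u) = 0 := by
      intro k u hu hgt
      have hargA : 2 * (Real.exp (-(k : ℝ)) * u) * Real.exp (-a - 1)
          = Real.exp (Real.log 2 + (Real.log u - (k : ℝ)) + (-a - 1)) := by
        have hsub : Real.exp (Real.log u - (k : ℝ)) = u * (Real.exp (k : ℝ))⁻¹ := by
          rw [Real.exp_sub, Real.exp_log hu, div_eq_mul_inv]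
        rw [Real.exp_add, Real.exp_add, hsub, Real.exp_log two_pos, Real.exp_neg]
        ring
      have hargB : 2 * (Real.exp (-(k : ℝ)) * u) * Real.exp b
          = Real.exp (Real.log 2 + (Real.log u - (k : ℝ)) + b) := by
        have hsub : Real.exp (Real.log u - (k : ℝ)) = u * (Real.exp (k : ℝ))⁻¹ := by
          rw [Real.exp_sub, Real.exp_log hu, div_eq_mul_inv]
        rw [Real.exp_add, Real.exp_add, hsub, Real.exp_log two_pos, Real.exp_neg]
        ring
      have hA0 : χa (2 * (Real.exp (-(k : ℝ)) * u) * Real.exp (-a - 1)) = 0 := by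
        apply hsupa
        rw [hargA]
        intro hmem
        have h1 := Real.exp_le_exp.mp hmem.1
        have h2 := Real.exp_le_exp.mp hmem.2
        rcases lt_abs.mp hgt with h | h
        · linarith
        · linarith
      have hB0 : χb (2 * (Real.exp (-(k : ℝ)) * u) * Real.exp b) = 0 := by
        apply hsupb
        rw [hargB]
        intro hmem
        have h1 := Real.exp_le_exp.mp hmem.1
        have h2 := Real.exp_le_exp.mp hmem.2
        rcases lt_abs.mp hgt with h | h
        · linarith
        · linarith
      show (1 - α) * χa (2 * (Real.exp (-(k : ℝ)) * u) * Real.exp (-a - 1))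
          + α * χb (2 * (Real.exp (-(k : ℝ)) * u) * Real.exp b) = 0
      rw [hA0, hB0]; ring
    exact ⟨(2 * R + 2) * (M * R ^ ν), fun u hu => moment_bound χ M R hM hR hbχ hz ν hν u hu⟩
  · -- Mellin values
    intro k
    set G : ℝ → ℝ := fun v => χb (2 * v * Real.exp b) with hGdef
    have hc₁ : (0 : ℝ) < Real.exp (-b) / (2 * Real.exp b) := by positivity
    have hGcont : ContinuousOn G (Set.Ioi 0) := by
      apply hcontb.comp ((continuous_const.mul continuous_id').mul continuous_const).continuousOn
      intro v hv
      have : (0 : ℝ) < v := hv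
      exact mul_pos (mul_pos two_pos this) (Real.exp_pos b)
    have hGsup : ∀ u : ℝ, u ∉ Set.Icc (Real.exp (-b) / (2 * Real.exp b)) (1 / 2 : ℝ) →
        G u = 0 := by
      intro u hu
      apply hsupb
      intro hmem
      apply hu
      obtain ⟨h1, h2⟩ := hmem
      have h2b : (0 : ℝ) < 2 * Real.exp b := by positivity
      constructor
      · rw [div_le_iff₀ h2b]
        have : u * (2 * Real.exp b) = 2 * u * Real.exp b := by ring
        rw [this]; exact h1
      · have h2' : (2 * u) * Real.exp b ≤ 1 * Real.exp b := by rw [one_mul]; exact h2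
        have := (mul_le_mul_iff_left₀ (Real.exp_pos b)).mp h2'
        linarith
    have hGpart : ∀ u : ℝ, 0 < u → HasSum (fun k' : ℤ => G (Real.exp (-(k' : ℝ)) * u)) 1 := by
      intro u hu
      have h := hkb.2.1 (2 * u * Real.exp b) (by positivity)
      have hfun : (fun k' : ℤ => χb (Real.exp (-(k' : ℝ)) * (2 * u * Real.exp b)))
          = fun k' : ℤ => G (Real.exp (-(k' : ℝ)) * u) := by
        funext k'
        show _ = χb (2 * (Real.exp (-(k' : ℝ)) * u) * Real.exp b)
        congr 1
        ring
      rw [hfun] at h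
      exact h
    have hkm := kernelMellin G _ _ hc₁ hGcont hGsup hGpart k
    have hstep_a : Set.EqOn
        (fun v : ℝ => (v : ℂ) ^ (2 * (Real.pi : ℂ) * (k : ℂ) * Complex.I - 1) * (χ v : ℂ))
        (fun v : ℝ => (α : ℂ) *
          ((v : ℂ) ^ (2 * (Real.pi : ℂ) * (k : ℂ) * Complex.I - 1) * (G v : ℂ)))
        (Set.Ioo (0 : ℝ) 1) := by
      intro v hv
      have hA0 : χa (2 * v * Real.exp (-a - 1)) = 0 := by
        apply hsupa
        intro hmem
        have hprod : Real.exp (-a - 1) * Real.exp 1 = Real.exp (-a) := by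
          rw [← Real.exp_add]; congr 1; ring
        have h2v : 2 * v < Real.exp 1 := by
          have := hv.2; linarith
        have harg : 2 * v * Real.exp (-a - 1) < Real.exp (-a) := by
          calc 2 * v * Real.exp (-a - 1) < Real.exp 1 * Real.exp (-a - 1) :=
                mul_lt_mul_of_pos_right h2v (Real.exp_pos _)
            _ = Real.exp (-a) := by rw [mul_comm, hprod]
        exact absurd hmem.1 (not_le.mpr harg)
      show (v : ℂ) ^ (2 * (Real.pi : ℂ) * (k : ℂ) * Complex.I - 1) *
          (((1 - α) * χa (2 * v * Real.exp (-a - 1)) + α * χb (2 * v * Real.exp b) : ℝ) : ℂ)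
          = _
      rw [hA0]
      simp only [hGdef]
      push_cast
      ring
    rw [MeasureTheory.setIntegral_congr_fun measurableSet_Ioo hstep_a,
      MeasureTheory.integral_const_mul]
    have hdiff : ∀ v ∈ Set.Ioi (0 : ℝ) \ Set.Ioo (0 : ℝ) 1,
        (v : ℂ) ^ (2 * (Real.pi : ℂ) * (k : ℂ) * Complex.I - 1) * (G v : ℂ) = 0 := by
      intro v hv
      have hv1 : (1 : ℝ) ≤ v := by
        rcases hv with ⟨hv0, hv2⟩
        by_contra hcon
        exact hv2 ⟨hv0, not_le.mp hcon⟩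
      have hG0 : G v = 0 := by
        apply hGsup
        intro hmem
        have := hmem.2
        linarith
      rw [hG0, Complex.ofReal_zero, mul_zero]
    have hext := MeasureTheory.setIntegral_eq_of_subset_of_forall_diff_eq_zero (μ := volume)
      measurableSet_Ioi Set.Ioo_subset_Ioi_self hdiff
    rw [← hext, hkm]
    split_ifs <;> simp
end
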